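/- arXiv:1207.5712 — 12 statements merged into one kernel-verified Lean document; each statement's English description precedes it below -/
import Mathlib

section
/- Let G be the simple graph on vertex set {1,...,7} with edge set E = {{1,2},{1,7},{2,3},{2,4},{2,7},{3,7},{4,5},{4,6},{5,6},{6,7}} (the graph G706 of the atlas). Then msr(G) = 5; that is, there exists a 7×7 Hermitian positive semidefinite complex matrix with graph G of rank 5, and every 7×7 Hermitian positive semidefinite complex matrix with graph G has rank at least 5. -/
open Matrix ComplexOrder

/-- The edge set of the graph G706 on vertices 1,...,7. -/
def edgesG706 : Set (Sym2 ℕ) :=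
  {s(1, 2), s(1, 7), s(2, 3), s(2, 4), s(2, 7), s(3, 7), s(4, 5), s(4, 6), s(5, 6), s(6, 7)}

/-- `M` has graph G706: for `i ≠ j`, `M i j ≠ 0` iff `{i+1, j+1}` is an edge of G706. -/
def HasGraphG706 (M : Matrix (Fin 7) (Fin 7) ℂ) : Prop :=
  ∀ i j : Fin 7, i ≠ j → (M i j ≠ 0 ↔ s((i : ℕ) + 1, (j : ℕ) + 1) ∈ edgesG706)

/-- Columns realize G706 in ℂ^5:
v0=(1,0,0,0,0), v1=(1,1,0,0,1), v2=(0,1,0,0,0), v3=(0,0,1,1,1),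
v4=(0,0,1,0,0), v5=(0,0,1,1,0), v6=(1,1,0,1,-1). -/
def AexG706 : Matrix (Fin 5) (Fin 7) ℂ := fun i j =>
  if j = 0 then (if i = 0 then 1 else 0)
  else if j = 1 then (if i = 0 ∨ i = 1 ∨ i = 4 then 1 else 0)
  else if j = 2 then (if i = 1 then 1 else 0)
  else if j = 3 then (if i = 2 ∨ i = 3 ∨ i = 4 then 1 else 0)
  else if j = 4 then (if i = 2 then 1 else 0)
  else if j = 5 then (if i = 2 ∨ i = 3 then 1 else 0)
  else (if i = 4 then -1 else if i = 0 ∨ i = 1 ∨ i = 3 then 1 else 0)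

def BexG706 : Matrix (Fin 7) (Fin 5) ℂ := fun i j =>
  if i = 0 ∧ j = 0 then 1
  else if i = 0 ∧ j = 4 then -1
  else if i = 1 ∧ j = 4 then 1
  else if i = 2 ∧ j = 1 then 1
  else if i = 2 ∧ j = 4 then -1
  else if i = 4 ∧ j = 2 then 1
  else if i = 4 ∧ j = 3 then -1
  else if i = 5 ∧ j = 3 then 1
  else 0

set_option maxHeartbeats 2000000 in
theorem upperG706 : ∃ M : Matrix (Fin 7) (Fin 7) ℂ,
    M.PosSemidef ∧ HasGraphG706 M ∧ M.rank = 5 := by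
  refine ⟨AexG706ᴴ * AexG706, posSemidef_conjTranspose_mul_self _, ?_, ?_⟩
  · intro i j hij
    fin_cases i <;> fin_cases j <;>
      first
      | exact absurd rfl hij
      | (simp (config := { decide := true }) only [Matrix.mul_apply,
          Matrix.conjTranspose_apply, Fin.sum_univ_five, AexG706,
          edgesG706, Set.mem_insert_iff, Set.mem_singleton_iff]
         norm_num [Sym2.eq_iff])
  · have hAB : AexG706 * BexG706 = 1 := by
      ext i j
      fin_cases i <;> fin_cases j <;>
        (simp (config := { decide := true }) only [Matrix.mul_apply, Fin.sum_univ_seven,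
          AexG706, BexG706, Matrix.one_apply]
         <;> norm_num)
    have hle : AexG706.rank ≤ 5 := by
      simpa using AexG706.rank_le_card_height
    have hge : 5 ≤ AexG706.rank := by
      have h1 := Matrix.rank_mul_le_left AexG706 BexG706
      rw [hAB, Matrix.rank_one] at h1
      simpa using h1
    rw [Matrix.rank_conjTranspose_mul_self]
    omega

theorem lowerG706 (M : Matrix (Fin 7) (Fin 7) ℂ) (hM : M.PosSemidef) (hG : HasGraphG706 M) :
    5 ≤ M.rank := by
  classical
  have edge : ∀ i j : Fin 7, i ≠ j → s((i:ℕ)+1, (j:ℕ)+1) ∈ edgesG706 → M i j ≠ 0 :=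
    fun i j h h' => (hG i j h).mpr h'
  have nonedge : ∀ i j : Fin 7, i ≠ j → s((i:ℕ)+1, (j:ℕ)+1) ∉ edgesG706 → M i j = 0 := by
    intro i j h h'
    by_contra hc; exact h' ((hG i j h).mp hc)
  -- edge facts
  have e10 : M 1 0 ≠ 0 := edge 1 0 (by decide) (by simp only [edgesG706, Set.mem_insert_iff, Set.mem_singleton_iff]; decide)
  have e12 : M 1 2 ≠ 0 := edge 1 2 (by decide) (by simp only [edgesG706, Set.mem_insert_iff, Set.mem_singleton_iff]; decide)
  have e34 : M 3 4 ≠ 0 := edge 3 4 (by decide) (by simp only [edgesG706, Set.mem_insert_iff, Set.mem_singleton_iff]; decide)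
  have e31 : M 3 1 ≠ 0 := edge 3 1 (by decide) (by simp only [edgesG706, Set.mem_insert_iff, Set.mem_singleton_iff]; decide)
  have e65 : M 6 5 ≠ 0 := edge 6 5 (by decide) (by simp only [edgesG706, Set.mem_insert_iff, Set.mem_singleton_iff]; decide)
  -- nonedge facts
  have n02 : M 0 2 = 0 := nonedge 0 2 (by decide) (by simp only [edgesG706, Set.mem_insert_iff, Set.mem_singleton_iff]; decide)
  have n20 : M 2 0 = 0 := nonedge 2 0 (by decide) (by simp only [edgesG706, Set.mem_insert_iff, Set.mem_singleton_iff]; decide)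
  have n04 : M 0 4 = 0 := nonedge 0 4 (by decide) (by simp only [edgesG706, Set.mem_insert_iff, Set.mem_singleton_iff]; decide)
  have n40 : M 4 0 = 0 := nonedge 4 0 (by decide) (by simp only [edgesG706, Set.mem_insert_iff, Set.mem_singleton_iff]; decide)
  have n24 : M 2 4 = 0 := nonedge 2 4 (by decide) (by simp only [edgesG706, Set.mem_insert_iff, Set.mem_singleton_iff]; decide)
  have n42 : M 4 2 = 0 := nonedge 4 2 (by decide) (by simp only [edgesG706, Set.mem_insert_iff, Set.mem_singleton_iff]; decide)
  have n41 : M 4 1 = 0 := nonedge 4 1 (by decide) (by simp only [edgesG706, Set.mem_insert_iff, Set.mem_singleton_iff]; decide)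
  have n14 : M 1 4 = 0 := nonedge 1 4 (by decide) (by simp only [edgesG706, Set.mem_insert_iff, Set.mem_singleton_iff]; decide)
  have n30 : M 3 0 = 0 := nonedge 3 0 (by decide) (by simp only [edgesG706, Set.mem_insert_iff, Set.mem_singleton_iff]; decide)
  have n32 : M 3 2 = 0 := nonedge 3 2 (by decide) (by simp only [edgesG706, Set.mem_insert_iff, Set.mem_singleton_iff]; decide)
  have n50 : M 5 0 = 0 := nonedge 5 0 (by decide) (by simp only [edgesG706, Set.mem_insert_iff, Set.mem_singleton_iff]; decide)
  have n05 : M 0 5 = 0 := nonedge 0 5 (by decide) (by simp only [edgesG706, Set.mem_insert_iff, Set.mem_singleton_iff]; decide)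
  have n51 : M 5 1 = 0 := nonedge 5 1 (by decide) (by simp only [edgesG706, Set.mem_insert_iff, Set.mem_singleton_iff]; decide)
  have n15 : M 1 5 = 0 := nonedge 1 5 (by decide) (by simp only [edgesG706, Set.mem_insert_iff, Set.mem_singleton_iff]; decide)
  have n52 : M 5 2 = 0 := nonedge 5 2 (by decide) (by simp only [edgesG706, Set.mem_insert_iff, Set.mem_singleton_iff]; decide)
  have n25 : M 2 5 = 0 := nonedge 2 5 (by decide) (by simp only [edgesG706, Set.mem_insert_iff, Set.mem_singleton_iff]; decide)
  have n64 : M 6 4 = 0 := nonedge 6 4 (by decide) (by simp only [edgesG706, Set.mem_insert_iff, Set.mem_singleton_iff]; decide)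
  -- a PSD matrix with zero diagonal entry has zero column
  have diagkey : ∀ i j : Fin 7, M j i ≠ 0 → M i i ≠ 0 := by
    intro i j hji hii
    have hq : star (fun k => if k = i then 1 else 0 : Fin 7 → ℂ) ⬝ᵥ
        M *ᵥ (fun k => if k = i then 1 else 0) = 0 := by
      simp [dotProduct, mulVec, hii]
    have h0 := (hM.dotProduct_mulVec_zero_iff _).mp hq
    have h1 := congrFun h0 j
    simp [mulVec, dotProduct] at h1
    exact hji h1
  have d0 : M 0 0 ≠ 0 := diagkey 0 1 e10
  have d2 : M 2 2 ≠ 0 := diagkey 2 1 e12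
  have d4 : M 4 4 ≠ 0 := diagkey 4 3 e34
  -- vectors
  set x1 : Fin 7 → ℂ := (fun k => if k = 0 then -(M 0 1 / M 0 0) else if k = 1 then 1
      else if k = 2 then -(M 2 1 / M 2 2) else 0) with hx1
  set x5 : Fin 7 → ℂ := (fun k => if k = 4 then -(M 4 5 / M 4 4) else if k = 5 then 1 else 0)
    with hx5
  have zv1 : ∀ r, (M *ᵥ x1) r
      = M r 0 * (-(M 0 1 / M 0 0)) + M r 1 + M r 2 * (-(M 2 1 / M 2 2)) := by
    intro r
    simp [hx1, mulVec, dotProduct, Fin.sum_univ_seven]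
  have zv5 : ∀ r, (M *ᵥ x5) r = M r 4 * (-(M 4 5 / M 4 4)) + M r 5 := by
    intro r
    simp [hx5, mulVec, dotProduct, Fin.sum_univ_seven]
  have z10 : (M *ᵥ x1) 0 = 0 := by rw [zv1 0, n02]; field_simp; ring
  have z12 : (M *ᵥ x1) 2 = 0 := by rw [zv1 2, n20]; field_simp; ring
  have z14 : (M *ᵥ x1) 4 = 0 := by rw [zv1 4, n40, n41, n42]; ring
  have z15 : (M *ᵥ x1) 5 = 0 := by rw [zv1 5, n50, n51, n52]; ring
  have z13 : (M *ᵥ x1) 3 ≠ 0 := by rw [zv1 3, n30, n32]; simpa using e31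
  have z50 : (M *ᵥ x5) 0 = 0 := by rw [zv5 0, n04, n05]; ring
  have z52 : (M *ᵥ x5) 2 = 0 := by rw [zv5 2, n24, n25]; ring
  have z54 : (M *ᵥ x5) 4 = 0 := by rw [zv5 4]; field_simp; ring
  have z51 : (M *ᵥ x5) 1 = 0 := by rw [zv5 1, n14, n15]; ring
  have z56 : (M *ᵥ x5) 6 ≠ 0 := by rw [zv5 6, n64]; simpa using e65
  have z11 : (M *ᵥ x1) 1 ≠ 0 := by
    intro h
    have hq : star x1 ⬝ᵥ M *ᵥ x1 = 0 := by
      have hd : star x1 ⬝ᵥ M *ᵥ x1 = star (x1 0) * (M *ᵥ x1) 0 + star (x1 1) * (M *ᵥ x1) 1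
          + star (x1 2) * (M *ᵥ x1) 2 + star (x1 3) * (M *ᵥ x1) 3 + star (x1 4) * (M *ᵥ x1) 4
          + star (x1 5) * (M *ᵥ x1) 5 + star (x1 6) * (M *ᵥ x1) 6 := by
        simp [dotProduct, Fin.sum_univ_seven]
      rw [hd, z10, z12, h]
      simp [hx1]
    have h0 := (hM.dotProduct_mulVec_zero_iff _).mp hq
    exact z13 (by rw [h0]; rfl)
  have z55 : (M *ᵥ x5) 5 ≠ 0 := by
    intro h
    have hq : star x5 ⬝ᵥ M *ᵥ x5 = 0 := by
      have hd : star x5 ⬝ᵥ M *ᵥ x5 = star (x5 0) * (M *ᵥ x5) 0 + star (x5 1) * (M *ᵥ x5) 1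
          + star (x5 2) * (M *ᵥ x5) 2 + star (x5 3) * (M *ᵥ x5) 3 + star (x5 4) * (M *ᵥ x5) 4
          + star (x5 5) * (M *ᵥ x5) 5 + star (x5 6) * (M *ᵥ x5) 6 := by
        simp [dotProduct, Fin.sum_univ_seven]
      rw [hd, z54, h]
      simp [hx5]
    have h0 := (hM.dotProduct_mulVec_zero_iff _).mp hq
    exact z56 (by rw [h0]; rfl)
  -- the five vectors
  set b0 : Fin 7 → ℂ := (fun k => if k = 0 then 1 else 0) with hb0
  set b2 : Fin 7 → ℂ := (fun k => if k = 2 then 1 else 0) with hb2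
  set b4 : Fin 7 → ℂ := (fun k => if k = 4 then 1 else 0) with hb4
  have col0 : ∀ r, (M *ᵥ b0) r = M r 0 := by
    intro r; simp [hb0, mulVec, dotProduct]
  have col2 : ∀ r, (M *ᵥ b2) r = M r 2 := by
    intro r; simp [hb2, mulVec, dotProduct]
  have col4 : ∀ r, (M *ᵥ b4) r = M r 4 := by
    intro r; simp [hb4, mulVec, dotProduct]
  set f : Fin 5 → (Fin 7 → ℂ) := ![M *ᵥ b0, M *ᵥ b2, M *ᵥ b4, M *ᵥ x1, M *ᵥ x5] with hf
  have hindep : LinearIndependent ℂ f := by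
    rw [Fintype.linearIndependent_iff]
    intro g hg
    have hr : ∀ r : Fin 7, g 0 * (M *ᵥ b0) r + g 1 * (M *ᵥ b2) r + g 2 * (M *ᵥ b4) r
        + g 3 * (M *ᵥ x1) r + g 4 * (M *ᵥ x5) r = 0 := by
      intro r
      have h := congrFun hg r
      simpa [hf, Fin.sum_univ_five] using h
    have h0 := hr 0; rw [col0 0, col2 0, col4 0, n02, n04, z10, z50] at h0
    have hg0 : g 0 = 0 := by
      simp [mul_eq_zero, d0] at h0
      tauto
    have h2 := hr 2; rw [col0 2, col2 2, col4 2, n20, n24, z12, z52] at h2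
    have hg1 : g 1 = 0 := by
      simp [mul_eq_zero, d2] at h2
      tauto
    have h4 := hr 4; rw [col0 4, col2 4, col4 4, n40, n42, z14, z54] at h4
    have hg2 : g 2 = 0 := by
      simp [mul_eq_zero, d4] at h4
      tauto
    have h1 := hr 1; rw [hg0, hg1, hg2, z51] at h1
    have hg3 : g 3 = 0 := by
      simp [mul_eq_zero, z11] at h1
      tauto
    have h5 := hr 5; rw [hg0, hg1, hg2, hg3, z15] at h5
    have hg4 : g 4 = 0 := by
      simp [mul_eq_zero, z55] at h5
      tauto
    intro i
    fin_cases i <;> assumption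
  have hsub : Submodule.span ℂ (Set.range f) ≤ LinearMap.range M.mulVecLin := by
    rw [Submodule.span_le]
    rintro y ⟨i, rfl⟩
    fin_cases i
    · exact ⟨b0, rfl⟩
    · exact ⟨b2, rfl⟩
    · exact ⟨b4, rfl⟩
    · exact ⟨x1, rfl⟩
    · exact ⟨x5, rfl⟩
  have h5 : Module.finrank ℂ (Submodule.span ℂ (Set.range f)) = 5 := by
    rw [finrank_span_eq_card hindep]; simp
  have hle := Submodule.finrank_mono hsub
  rw [h5] at hle
  exact hle

/-- msr(G706) = 5. -/
theorem msr_G706 :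
    (∃ M : Matrix (Fin 7) (Fin 7) ℂ, M.PosSemidef ∧ HasGraphG706 M ∧ M.rank = 5) ∧
    (∀ M : Matrix (Fin 7) (Fin 7) ℂ, M.PosSemidef → HasGraphG706 M → 5 ≤ M.rank) := by
  exact ⟨upperG706, lowerG706⟩
end

section
/- Let G be the simple graph on vertex set {1,...,7} with edge set E = {{1,2},{1,6},{2,3},{2,6},{2,7},{3,4},{3,5},{3,7},{4,5},{5,6},{5,7},{6,7}} (the graph G946 of the atlas). Then msr(G) = 4; that is, there exists a 7×7 Hermitian positive semidefinite complex matrix with graph G of rank 4, and every 7×7 Hermitian positive semidefinite complex matrix with graph G has rank at least 4. -/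
open Matrix ComplexOrder

/-- The edge set of the graph G946 on vertices 1,...,7. -/
def edgesG946 : Set (Sym2 ℕ) :=
  {s(1, 2), s(1, 6), s(2, 3), s(2, 6), s(2, 7), s(3, 4), s(3, 5), s(3, 7), s(4, 5), s(5, 6), s(5, 7), s(6, 7)}

/-- `M` has graph G946: for `i ≠ j`, `M i j ≠ 0` iff `{i+1, j+1}` is an edge of G946. -/
def HasGraphG946 (M : Matrix (Fin 7) (Fin 7) ℂ) : Prop :=
  ∀ i j : Fin 7, i ≠ j → (M i j ≠ 0 ↔ s((i : ℕ) + 1, (j : ℕ) + 1) ∈ edgesG946)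

/-- Rank of a general submatrix is at most the rank of the matrix. -/
lemma rank_submatrix_le'' {m n : ℕ} (A : Matrix (Fin m) (Fin m) ℂ) (f g : Fin n → Fin m) :
    (A.submatrix f g).rank ≤ A.rank := by
  classical
  rw [Matrix.rank, Matrix.rank]
  have h : LinearMap.range (A.submatrix f g).mulVecLin ≤
      Submodule.map (LinearMap.funLeft ℂ ℂ f) (LinearMap.range A.mulVecLin) := by
    rintro _ ⟨x, rfl⟩
    refine ⟨A.mulVec (fun k => ∑ j, if g j = k then x j else 0),
      ⟨_, rfl⟩, ?_⟩
    ext i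
    simp only [LinearMap.funLeft_apply, Matrix.mulVec, dotProduct, Matrix.mulVecLin_apply,
      Matrix.submatrix_apply, Finset.mul_sum]
    rw [Finset.sum_comm]
    refine Finset.sum_congr rfl fun j _ => ?_
    rw [Finset.sum_eq_single (g j)]
    · simp
    · intro k _ hk
      simp [Ne.symm hk]
    · simp
  calc Module.finrank ℂ (LinearMap.range (A.submatrix f g).mulVecLin)
      ≤ Module.finrank ℂ (Submodule.map (LinearMap.funLeft ℂ ℂ f)
          (LinearMap.range A.mulVecLin)) := Submodule.finrank_mono h
    _ ≤ Module.finrank ℂ (LinearMap.range A.mulVecLin) := Submodule.finrank_map_le _ _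

/-- A 5×5 matrix whose zero pattern above the diagonal is that of the path, with nonzero
superdiagonal, has rank at least 4 (its kernel is at most one-dimensional). -/
lemma rank_path_ge (A : Matrix (Fin 5) (Fin 5) ℂ)
    (h01 : A 0 1 ≠ 0) (h12 : A 1 2 ≠ 0) (h23 : A 2 3 ≠ 0) (h34 : A 3 4 ≠ 0)
    (h02 : A 0 2 = 0) (h03 : A 0 3 = 0) (h04 : A 0 4 = 0)
    (h13 : A 1 3 = 0) (h14 : A 1 4 = 0) (h24 : A 2 4 = 0) :
    4 ≤ A.rank := by
  have key : ∀ u : Fin 5 → ℂ, A.mulVec u = 0 → u 0 = 0 → u = 0 := by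
    intro u hu h0
    have r : ∀ i : Fin 5,
        A i 0 * u 0 + A i 1 * u 1 + A i 2 * u 2 + A i 3 * u 3 + A i 4 * u 4 = 0 := by
      intro i
      have := congrFun hu i
      simpa [Matrix.mulVec, dotProduct, Fin.sum_univ_five] using this
    have h1 : u 1 = 0 := by
      have := r 0
      rw [h0, h02, h03, h04] at this
      simp only [mul_zero, zero_mul, add_zero, zero_add] at this
      exact (mul_eq_zero.mp this).resolve_left h01
    have h2 : u 2 = 0 := by
      have := r 1
      rw [h0, h1, h13, h14] at this
      simp only [mul_zero, zero_mul, add_zero, zero_add] at this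
      exact (mul_eq_zero.mp this).resolve_left h12
    have h3 : u 3 = 0 := by
      have := r 2
      rw [h0, h1, h2, h24] at this
      simp only [mul_zero, zero_mul, add_zero, zero_add] at this
      exact (mul_eq_zero.mp this).resolve_left h23
    have h4 : u 4 = 0 := by
      have := r 3
      rw [h0, h1, h2, h3] at this
      simp only [mul_zero, zero_mul, add_zero, zero_add] at this
      exact (mul_eq_zero.mp this).resolve_left h34
    funext i
    fin_cases i <;> assumption
  have hinj : Function.Injective
      ((LinearMap.proj (R := ℂ) (φ := fun _ : Fin 5 => ℂ) 0).comp
        (LinearMap.ker A.mulVecLin).subtype) := by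
    intro x y hxy
    apply Subtype.ext
    have hmem : (x : Fin 5 → ℂ) - y ∈ LinearMap.ker A.mulVecLin :=
      sub_mem x.2 y.2
    have hz : ((x : Fin 5 → ℂ) - y) 0 = 0 := by
      have : (x : Fin 5 → ℂ) 0 = (y : Fin 5 → ℂ) 0 := hxy
      simp [this]
    have := key _ (by simpa [Matrix.mulVecLin_apply] using hmem) hz
    exact sub_eq_zero.mp this
  have hk : Module.finrank ℂ (LinearMap.ker A.mulVecLin) ≤ 1 := by
    have := LinearMap.finrank_le_finrank_of_injective hinj
    simpa using this
  have hrn := LinearMap.finrank_range_add_finrank_ker A.mulVecLin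
  rw [Module.finrank_pi] at hrn
  simp only [Fintype.card_fin] at hrn
  rw [Matrix.rank]
  omega

lemma lower_bound (M : Matrix (Fin 7) (Fin 7) ℂ) (hG : HasGraphG946 M) : 4 ≤ M.rank := by
  have hmem : ∀ a b : ℕ, s(a, b) ∈ edgesG946 ↔
      (a = 1 ∧ b = 2 ∨ a = 2 ∧ b = 1) ∨ (a = 1 ∧ b = 6 ∨ a = 6 ∧ b = 1) ∨
      (a = 2 ∧ b = 3 ∨ a = 3 ∧ b = 2) ∨ (a = 2 ∧ b = 6 ∨ a = 6 ∧ b = 2) ∨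
      (a = 2 ∧ b = 7 ∨ a = 7 ∧ b = 2) ∨ (a = 3 ∧ b = 4 ∨ a = 4 ∧ b = 3) ∨
      (a = 3 ∧ b = 5 ∨ a = 5 ∧ b = 3) ∨ (a = 3 ∧ b = 7 ∨ a = 7 ∧ b = 3) ∨
      (a = 4 ∧ b = 5 ∨ a = 5 ∧ b = 4) ∨ (a = 5 ∧ b = 6 ∨ a = 6 ∧ b = 5) ∨
      (a = 5 ∧ b = 7 ∨ a = 7 ∧ b = 5) ∨ (a = 6 ∧ b = 7 ∨ a = 7 ∧ b = 6) := by
    intro a b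
    simp [edgesG946, Sym2.eq_iff]
  -- the induced path 1 - 2 - 7 - 5 - 4, i.e. indices 0, 1, 6, 4, 3
  set p : Fin 5 → Fin 7 := ![0, 1, 6, 4, 3] with hp
  have hz : ∀ i j : Fin 7, i ≠ j → ¬ (s((i : ℕ) + 1, (j : ℕ) + 1) ∈ edgesG946) → M i j = 0 := by
    intro i j hij hm
    by_contra h
    exact hm ((hG i j hij).1 h)
  refine le_trans ?_ (rank_submatrix_le'' M p p)
  apply rank_path_ge <;>
    simp only [Matrix.submatrix_apply, hp, Matrix.cons_val_zero, Matrix.cons_val_one,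
      Matrix.head_cons, Matrix.cons_val_fin_one]
  · exact (hG 0 1 (by decide)).2 (by rw [hmem]; decide)
  · exact (hG 1 6 (by decide)).2 (by rw [hmem]; decide)
  · exact (hG 6 4 (by decide)).2 (by rw [hmem]; decide)
  · exact (hG 4 3 (by decide)).2 (by rw [hmem]; decide)
  · exact hz 0 6 (by decide) (by rw [hmem]; decide)
  · exact hz 0 4 (by decide) (by rw [hmem]; decide)
  · exact hz 0 3 (by decide) (by rw [hmem]; decide)
  · exact hz 1 4 (by decide) (by rw [hmem]; decide)
  · exact hz 1 3 (by decide) (by rw [hmem]; decide)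
  · exact hz 6 3 (by decide) (by rw [hmem]; decide)

/-- The Gram factor: columns are an orthogonal representation of G946 in ℂ⁴. -/
def Bmat : Matrix (Fin 4) (Fin 7) ℂ :=
  !![1, 1, 0, 0, 0, 1, 0;
     0, 0, 1, 1, 1, 0, 0;
     0, 1, 1, 0, 2, 0, 1;
     0, -2, 0, 0, 1, 1, 1]

@[simp] lemma conj_two : (starRingEnd ℂ) 2 = 2 := map_ofNat _ 2

@[simp] lemma vec7_three {α : Type*} (a b c d e f g : α) : ![a,b,c,d,e,f,g] (3 : Fin 7) = d := rfl
@[simp] lemma vec7_four {α : Type*} (a b c d e f g : α) : ![a,b,c,d,e,f,g] (4 : Fin 7) = e := rfl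
@[simp] lemma vec7_five {α : Type*} (a b c d e f g : α) : ![a,b,c,d,e,f,g] (5 : Fin 7) = f := rfl
@[simp] lemma vec7_six {α : Type*} (a b c d e f g : α) : ![a,b,c,d,e,f,g] (6 : Fin 7) = g := rfl

/-- The Gram matrix `Bmatᴴ * Bmat`, written out explicitly. -/
def Mw : Matrix (Fin 7) (Fin 7) ℂ :=
  !![1, 1, 0, 0, 0, 1, 0;
     1, 6, 1, 0, 0, -1, -1;
     0, 1, 2, 1, 3, 0, 1;
     0, 0, 1, 1, 1, 0, 0;
     0, 0, 3, 1, 6, 1, 3;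
     1, -1, 0, 0, 1, 2, 1;
     0, -1, 1, 0, 3, 1, 2]

@[simp] lemma Bv_0_0 : Bmat 0 0 = 1 := rfl
@[simp] lemma Bv_0_1 : Bmat 0 1 = 1 := rfl
@[simp] lemma Bv_0_2 : Bmat 0 2 = 0 := rfl
@[simp] lemma Bv_0_3 : Bmat 0 3 = 0 := rfl
@[simp] lemma Bv_0_4 : Bmat 0 4 = 0 := rfl
@[simp] lemma Bv_0_5 : Bmat 0 5 = 1 := rfl
@[simp] lemma Bv_0_6 : Bmat 0 6 = 0 := rfl
@[simp] lemma Bv_1_0 : Bmat 1 0 = 0 := rfl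
@[simp] lemma Bv_1_1 : Bmat 1 1 = 0 := rfl
@[simp] lemma Bv_1_2 : Bmat 1 2 = 1 := rfl
@[simp] lemma Bv_1_3 : Bmat 1 3 = 1 := rfl
@[simp] lemma Bv_1_4 : Bmat 1 4 = 1 := rfl
@[simp] lemma Bv_1_5 : Bmat 1 5 = 0 := rfl
@[simp] lemma Bv_1_6 : Bmat 1 6 = 0 := rfl
@[simp] lemma Bv_2_0 : Bmat 2 0 = 0 := rfl
@[simp] lemma Bv_2_1 : Bmat 2 1 = 1 := rfl
@[simp] lemma Bv_2_2 : Bmat 2 2 = 1 := rfl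
@[simp] lemma Bv_2_3 : Bmat 2 3 = 0 := rfl
@[simp] lemma Bv_2_4 : Bmat 2 4 = 2 := rfl
@[simp] lemma Bv_2_5 : Bmat 2 5 = 0 := rfl
@[simp] lemma Bv_2_6 : Bmat 2 6 = 1 := rfl
@[simp] lemma Bv_3_0 : Bmat 3 0 = 0 := rfl
@[simp] lemma Bv_3_1 : Bmat 3 1 = -2 := rfl
@[simp] lemma Bv_3_2 : Bmat 3 2 = 0 := rfl
@[simp] lemma Bv_3_3 : Bmat 3 3 = 0 := rfl
@[simp] lemma Bv_3_4 : Bmat 3 4 = 1 := rfl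
@[simp] lemma Bv_3_5 : Bmat 3 5 = 1 := rfl
@[simp] lemma Bv_3_6 : Bmat 3 6 = 1 := rfl
@[simp] lemma Mv_0_0 : Mw 0 0 = 1 := rfl
@[simp] lemma Mv_0_1 : Mw 0 1 = 1 := rfl
@[simp] lemma Mv_0_2 : Mw 0 2 = 0 := rfl
@[simp] lemma Mv_0_3 : Mw 0 3 = 0 := rfl
@[simp] lemma Mv_0_4 : Mw 0 4 = 0 := rfl
@[simp] lemma Mv_0_5 : Mw 0 5 = 1 := rfl
@[simp] lemma Mv_0_6 : Mw 0 6 = 0 := rfl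
@[simp] lemma Mv_1_0 : Mw 1 0 = 1 := rfl
@[simp] lemma Mv_1_1 : Mw 1 1 = 6 := rfl
@[simp] lemma Mv_1_2 : Mw 1 2 = 1 := rfl
@[simp] lemma Mv_1_3 : Mw 1 3 = 0 := rfl
@[simp] lemma Mv_1_4 : Mw 1 4 = 0 := rfl
@[simp] lemma Mv_1_5 : Mw 1 5 = -1 := rfl
@[simp] lemma Mv_1_6 : Mw 1 6 = -1 := rfl
@[simp] lemma Mv_2_0 : Mw 2 0 = 0 := rfl
@[simp] lemma Mv_2_1 : Mw 2 1 = 1 := rfl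
@[simp] lemma Mv_2_2 : Mw 2 2 = 2 := rfl
@[simp] lemma Mv_2_3 : Mw 2 3 = 1 := rfl
@[simp] lemma Mv_2_4 : Mw 2 4 = 3 := rfl
@[simp] lemma Mv_2_5 : Mw 2 5 = 0 := rfl
@[simp] lemma Mv_2_6 : Mw 2 6 = 1 := rfl
@[simp] lemma Mv_3_0 : Mw 3 0 = 0 := rfl
@[simp] lemma Mv_3_1 : Mw 3 1 = 0 := rfl
@[simp] lemma Mv_3_2 : Mw 3 2 = 1 := rfl
@[simp] lemma Mv_3_3 : Mw 3 3 = 1 := rfl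
@[simp] lemma Mv_3_4 : Mw 3 4 = 1 := rfl
@[simp] lemma Mv_3_5 : Mw 3 5 = 0 := rfl
@[simp] lemma Mv_3_6 : Mw 3 6 = 0 := rfl
@[simp] lemma Mv_4_0 : Mw 4 0 = 0 := rfl
@[simp] lemma Mv_4_1 : Mw 4 1 = 0 := rfl
@[simp] lemma Mv_4_2 : Mw 4 2 = 3 := rfl
@[simp] lemma Mv_4_3 : Mw 4 3 = 1 := rfl
@[simp] lemma Mv_4_4 : Mw 4 4 = 6 := rfl
@[simp] lemma Mv_4_5 : Mw 4 5 = 1 := rfl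
@[simp] lemma Mv_4_6 : Mw 4 6 = 3 := rfl
@[simp] lemma Mv_5_0 : Mw 5 0 = 1 := rfl
@[simp] lemma Mv_5_1 : Mw 5 1 = -1 := rfl
@[simp] lemma Mv_5_2 : Mw 5 2 = 0 := rfl
@[simp] lemma Mv_5_3 : Mw 5 3 = 0 := rfl
@[simp] lemma Mv_5_4 : Mw 5 4 = 1 := rfl
@[simp] lemma Mv_5_5 : Mw 5 5 = 2 := rfl
@[simp] lemma Mv_5_6 : Mw 5 6 = 1 := rfl
@[simp] lemma Mv_6_0 : Mw 6 0 = 0 := rfl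
@[simp] lemma Mv_6_1 : Mw 6 1 = -1 := rfl
@[simp] lemma Mv_6_2 : Mw 6 2 = 1 := rfl
@[simp] lemma Mv_6_3 : Mw 6 3 = 0 := rfl
@[simp] lemma Mv_6_4 : Mw 6 4 = 3 := rfl
@[simp] lemma Mv_6_5 : Mw 6 5 = 1 := rfl
@[simp] lemma Mv_6_6 : Mw 6 6 = 2 := rfl

set_option maxHeartbeats 1000000 in
lemma Mw_eq : Bmatᴴ * Bmat = Mw := by
  ext i j
  fin_cases i <;> fin_cases j <;>
    simp [Matrix.mul_apply, Matrix.conjTranspose_apply, Fin.sum_univ_four] <;>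
    norm_num

set_option maxHeartbeats 1000000 in
lemma Mw_graph : HasGraphG946 Mw := by
  intro i j hij
  fin_cases i <;> fin_cases j <;>
    simp_all [edgesG946, Sym2.eq_iff]

/-- msr(G946) = 4. -/
theorem msr_G946 :
    (∃ M : Matrix (Fin 7) (Fin 7) ℂ, M.PosSemidef ∧ HasGraphG946 M ∧ M.rank = 4) ∧
    (∀ M : Matrix (Fin 7) (Fin 7) ℂ, M.PosSemidef → HasGraphG946 M → 4 ≤ M.rank) := by
  constructor
  · refine ⟨Mw, ?_, Mw_graph, ?_⟩
    · rw [← Mw_eq]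
      exact Matrix.posSemidef_conjTranspose_mul_self Bmat
    · have hle : Mw.rank ≤ 4 := by
        rw [← Mw_eq, Matrix.rank_conjTranspose_mul_self]
        simpa using Bmat.rank_le_card_height
      have hge : 4 ≤ Mw.rank := lower_bound Mw Mw_graph
      omega
  · intro M _ hG
    exact lower_bound M hG
end

section
/- Let G be the simple graph on vertex set {1,...,7} with edge set E = {{1,2},{1,5},{1,7},{2,3},{2,5},{2,7},{3,4},{3,6},{3,7},{4,6},{4,7},{5,6}} (the graph G998 of the atlas). Then msr(G) = 4; that is, there exists a 7×7 Hermitian positive semidefinite complex matrix with graph G of rank 4, and every 7×7 Hermitian positive semidefinite complex matrix with graph G has rank at least 4. -/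
set_option maxHeartbeats 1000000

open Matrix ComplexOrder

/-- The edge set of the graph G998 on vertices 1,...,7. -/
def edgesG998 : Set (Sym2 ℕ) :=
  {s(1, 2), s(1, 5), s(1, 7), s(2, 3), s(2, 5), s(2, 7), s(3, 4), s(3, 6), s(3, 7), s(4, 6), s(4, 7), s(5, 6)}

/-- `M` has graph G998: for `i ≠ j`, `M i j ≠ 0` iff `{i+1, j+1}` is an edge of G998. -/
def HasGraphG998 (M : Matrix (Fin 7) (Fin 7) ℂ) : Prop :=
  ∀ i j : Fin 7, i ≠ j → (M i j ≠ 0 ↔ s((i : ℕ) + 1, (j : ℕ) + 1) ∈ edgesG998)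

lemma psdDetNonneg {n : Type*} [Fintype n] [DecidableEq n] {N : Matrix n n ℂ}
    (hN : N.PosSemidef) : 0 ≤ N.det := by
  rw [hN.isHermitian.det_eq_prod_eigenvalues]
  norm_cast
  exact Complex.zero_le_real.mpr (Finset.prod_nonneg fun i _ => hN.eigenvalues_nonneg i)

lemma psdDiagNonneg {M : Matrix (Fin 7) (Fin 7) ℂ} (hM : M.PosSemidef) (i : Fin 7) :
    0 ≤ M i i := by
  have := psdDetNonneg (hM.submatrix ![i])
  rwa [Matrix.det_fin_one, Matrix.submatrix_apply] at this

lemma rank_ge_four {M : Matrix (Fin 7) (Fin 7) ℂ} (f : Fin 4 → Fin 7)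
    (h : (M.submatrix f f).det ≠ 0) : 4 ≤ M.rank := by
  classical
  set g : Fin 4 → (Fin 7 → ℂ) := fun j => M.mulVec (Pi.single (f j) 1) with hg
  have hgi : ∀ j i, g j i = M i (f j) := by
    intro j i
    simp [hg, Matrix.mulVec_single]
  have li : LinearIndependent ℂ g := by
    rw [Fintype.linearIndependent_iff]
    intro c hc j
    have hz : (M.submatrix f f) *ᵥ c = 0 := by
      ext k
      have := congrFun hc (f k)
      simp only [Finset.sum_apply, Pi.smul_apply, Pi.zero_apply, smul_eq_mul, hgi] at this
      simpa [Matrix.mulVec, dotProduct, Matrix.submatrix_apply, mul_comm] using this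
    exact congrFun (Matrix.eq_zero_of_mulVec_eq_zero h hz) j
  have hle : Submodule.span ℂ (Set.range g) ≤ LinearMap.range M.mulVecLin := by
    rw [Submodule.span_le]
    rintro _ ⟨j, rfl⟩
    exact ⟨Pi.single (f j) 1, rfl⟩
  calc (4 : ℕ) = Module.finrank ℂ (Submodule.span ℂ (Set.range g)) := by
        rw [finrank_span_eq_card li]; simp
    _ ≤ M.rank := Submodule.finrank_mono hle

lemma lowerBound (M : Matrix (Fin 7) (Fin 7) ℂ) (hP : M.PosSemidef) (hG : HasGraphG998 M) :
    4 ≤ M.rank := by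
  have hzero : ∀ i j : Fin 7, i ≠ j → ¬ s((i:ℕ)+1,(j:ℕ)+1) ∈ edgesG998 → M i j = 0 := by
    intro i j hij hm
    by_contra h
    exact hm ((hG i j hij).1 h)
  have hH : ∀ i j : Fin 7, M i j = star (M j i) := fun i j => (hP.isHermitian.apply i j).symm
  -- zero entries (non-edges)
  have h02 : M 0 2 = 0 := hzero 0 2 (by decide)
    (by simp only [edgesG998, Set.mem_insert_iff, Set.mem_singleton_iff]; decide)
  have h03 : M 0 3 = 0 := hzero 0 3 (by decide)
    (by simp only [edgesG998, Set.mem_insert_iff, Set.mem_singleton_iff]; decide)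
  have h05 : M 0 5 = 0 := hzero 0 5 (by decide)
    (by simp only [edgesG998, Set.mem_insert_iff, Set.mem_singleton_iff]; decide)
  have h13 : M 1 3 = 0 := hzero 1 3 (by decide)
    (by simp only [edgesG998, Set.mem_insert_iff, Set.mem_singleton_iff]; decide)
  have h24 : M 2 4 = 0 := hzero 2 4 (by decide)
    (by simp only [edgesG998, Set.mem_insert_iff, Set.mem_singleton_iff]; decide)
  have h34 : M 3 4 = 0 := hzero 3 4 (by decide)
    (by simp only [edgesG998, Set.mem_insert_iff, Set.mem_singleton_iff]; decide)
  have h20 : M 2 0 = 0 := by rw [hH 2 0, h02, star_zero]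
  have h30 : M 3 0 = 0 := by rw [hH 3 0, h03, star_zero]
  have h50 : M 5 0 = 0 := by rw [hH 5 0, h05, star_zero]
  have h31 : M 3 1 = 0 := by rw [hH 3 1, h13, star_zero]
  have h42 : M 4 2 = 0 := by rw [hH 4 2, h24, star_zero]
  have h43 : M 4 3 = 0 := by rw [hH 4 3, h34, star_zero]
  -- nonzero entries (edges)
  have h12 : M 1 2 ≠ 0 := (hG 1 2 (by decide)).2 (by simp only [edgesG998, Set.mem_insert_iff, Set.mem_singleton_iff]; decide)
  have h23 : M 2 3 ≠ 0 := (hG 2 3 (by decide)).2 (by simp only [edgesG998, Set.mem_insert_iff, Set.mem_singleton_iff]; decide)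
  have h04 : M 0 4 ≠ 0 := (hG 0 4 (by decide)).2 (by simp only [edgesG998, Set.mem_insert_iff, Set.mem_singleton_iff]; decide)
  have h45 : M 4 5 ≠ 0 := (hG 4 5 (by decide)).2 (by simp only [edgesG998, Set.mem_insert_iff, Set.mem_singleton_iff]; decide)
  -- conjugate pair products
  have f12 : M 1 2 * M 2 1 = (Complex.normSq (M 1 2) : ℂ) := by
    rw [hH 2 1]; exact Complex.mul_conj _
  have f23 : M 2 3 * M 3 2 = (Complex.normSq (M 2 3) : ℂ) := by
    rw [hH 3 2]; exact Complex.mul_conj _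
  have f04 : M 0 4 * M 4 0 = (Complex.normSq (M 0 4) : ℂ) := by
    rw [hH 4 0]; exact Complex.mul_conj _
  have f45 : M 4 5 * M 5 4 = (Complex.normSq (M 4 5) : ℂ) := by
    rw [hH 5 4]; exact Complex.mul_conj _
  by_cases ha : M 2 2 * M 3 3 - M 2 3 * M 3 2 = 0
  · exfalso
    have hdet := psdDetNonneg (hP.submatrix ![1,2,3])
    rw [Matrix.det_fin_three] at hdet
    simp only [Matrix.submatrix_apply, Matrix.cons_val_zero, Matrix.cons_val_one,
      Matrix.cons_val_two, Matrix.cons_val_succ, Matrix.head_cons, Matrix.vecHead, Matrix.vecTail,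
      Function.comp, h13, h31, mul_zero, zero_mul, add_zero, sub_zero] at hdet
    have key : M 1 1 * M 2 2 * M 3 3 - M 1 1 * M 2 3 * M 3 2 - M 1 2 * M 2 1 * M 3 3
        = -((Complex.normSq (M 1 2) : ℂ) * M 3 3) := by
      linear_combination M 1 1 * ha - M 3 3 * f12
    rw [key] at hdet
    have hx : (Complex.normSq (M 1 2) : ℂ) * M 3 3 = 0 :=
      le_antisymm (neg_nonneg.mp hdet)
        (mul_nonneg (Complex.zero_le_real.mpr (Complex.normSq_nonneg _)) (psdDiagNonneg hP 3))
    rcases mul_eq_zero.mp hx with hc | h33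
    · exact h12 (Complex.normSq_eq_zero.mp (by exact_mod_cast hc))
    · rw [h33, mul_zero, zero_sub, neg_eq_zero, f23] at ha
      exact h23 (Complex.normSq_eq_zero.mp (by exact_mod_cast ha))
  by_cases hb : M 0 0 * M 4 4 - M 0 4 * M 4 0 = 0
  · exfalso
    have hdet := psdDetNonneg (hP.submatrix ![0,4,5])
    rw [Matrix.det_fin_three] at hdet
    simp only [Matrix.submatrix_apply, Matrix.cons_val_zero, Matrix.cons_val_one,
      Matrix.cons_val_two, Matrix.cons_val_succ, Matrix.head_cons, Matrix.vecHead, Matrix.vecTail,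
      Function.comp, h05, h50, mul_zero, zero_mul, add_zero, sub_zero] at hdet
    have key : M 0 0 * M 4 4 * M 5 5 - M 0 0 * M 4 5 * M 5 4 - M 0 4 * M 4 0 * M 5 5
        = -(M 0 0 * (Complex.normSq (M 4 5) : ℂ)) := by
      linear_combination M 5 5 * hb - M 0 0 * f45
    rw [key] at hdet
    have hx : M 0 0 * (Complex.normSq (M 4 5) : ℂ) = 0 :=
      le_antisymm (neg_nonneg.mp hdet)
        (mul_nonneg (psdDiagNonneg hP 0) (Complex.zero_le_real.mpr (Complex.normSq_nonneg _)))
    rcases mul_eq_zero.mp hx with h00 | hc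
    · rw [h00, zero_mul, zero_sub, neg_eq_zero, f04] at hb
      exact h04 (Complex.normSq_eq_zero.mp (by exact_mod_cast hb))
    · exact h45 (Complex.normSq_eq_zero.mp (by exact_mod_cast hc))
  -- main case
  apply rank_ge_four ![0,2,3,4]
  have hS : M.submatrix ![0,2,3,4] ![0,2,3,4]
      = !![M 0 0, 0, 0, M 0 4; 0, M 2 2, M 2 3, 0; 0, M 3 2, M 3 3, 0; M 4 0, 0, 0, M 4 4] := by
    ext i j
    fin_cases i <;> fin_cases j <;>
      simp [h02, h03, h24, h34, h20, h30, h42, h43, Matrix.vecHead, Matrix.vecTail, Function.comp]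
  rw [hS]
  have hdet4 : (!![M 0 0, 0, 0, M 0 4; 0, M 2 2, M 2 3, 0; 0, M 3 2, M 3 3, 0;
      M 4 0, 0, 0, M 4 4] : Matrix (Fin 4) (Fin 4) ℂ).det
      = (M 0 0 * M 4 4 - M 0 4 * M 4 0) * (M 2 2 * M 3 3 - M 2 3 * M 3 2) := by
    simp [Matrix.det_succ_row_zero, Fin.sum_univ_succ, Matrix.det_fin_three, Matrix.vecHead,
      Matrix.vecTail, Function.comp, show (Fin.castSucc 2 : Fin 4) = 2 from rfl,
      show (Fin.succAbove (3 : Fin 4) (2 : Fin 3)) = 2 from rfl, Matrix.cons_val_two, Matrix.cons_val_succ]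
    ring
  rw [hdet4]
  exact mul_ne_zero hb ha

def gA : Matrix (Fin 4) (Fin 7) ℂ :=
  !![0,0,1,1,0,1,2; 1,1,0,0,1,0,3; 0,1,0,0,1,1,-3; 0,-1,1,0,0,1,1]

def gZ : Matrix (Fin 7) (Fin 7) ℤ :=
  !![1,1,0,0,1,0,3; 1,3,-1,0,2,0,-1; 0,-1,2,1,0,2,3; 0,0,1,1,0,1,2;
     1,2,0,0,2,1,0; 0,0,2,1,1,3,0; 3,-1,3,2,0,0,23]

noncomputable def gM : Matrix (Fin 7) (Fin 7) ℂ := gZ.map Int.cast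

lemma gM_eq : gM = gAᴴ * gA := by
  ext i j
  fin_cases i <;> fin_cases j <;>
    norm_num [gM, gZ, gA, Matrix.mul_apply, Fin.sum_univ_four, Matrix.conjTranspose_apply,
      Matrix.vecHead, Matrix.vecTail, Function.comp, map_ofNat, Matrix.cons_val_two, Matrix.cons_val_three]

lemma gM_psd : gM.PosSemidef := gM_eq ▸ Matrix.posSemidef_conjTranspose_mul_self gA

lemma gM_rank_le : gM.rank ≤ 4 := by
  rw [gM_eq, Matrix.rank_conjTranspose_mul_self]
  simpa using gA.rank_le_card_height

lemma gM_graph : HasGraphG998 gM := by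
  intro i j hij
  simp only [gM, Matrix.map_apply, ne_eq, Int.cast_eq_zero, edgesG998, Set.mem_insert_iff,
    Set.mem_singleton_iff, gZ, Matrix.of_apply]
  revert hij
  revert i j
  decide

/-- msr(G998) = 4. -/
theorem msr_G998 :
    (∃ M : Matrix (Fin 7) (Fin 7) ℂ, M.PosSemidef ∧ HasGraphG998 M ∧ M.rank = 4) ∧
    (∀ M : Matrix (Fin 7) (Fin 7) ℂ, M.PosSemidef → HasGraphG998 M → 4 ≤ M.rank) := by
  refine ⟨⟨gM, gM_psd, gM_graph, le_antisymm gM_rank_le (lowerBound gM gM_psd gM_graph)⟩,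
    fun M hP hG => lowerBound M hP hG⟩
end

section
/- Let G be the simple graph on vertex set {1,...,7} with edge set E = {{1,2},{1,5},{1,6},{1,7},{2,3},{2,5},{2,6},{2,7},{3,4},{3,5},{3,6},{4,5},{4,6}} (the graph G1069 of the atlas). Then msr(G) = 4; that is, there exists a 7×7 Hermitian positive semidefinite complex matrix with graph G of rank 4, and every 7×7 Hermitian positive semidefinite complex matrix with graph G has rank at least 4. -/
open Matrix ComplexOrder

/-- The edge set of the graph G1069 on vertices 1,...,7. -/
def edgesG1069 : Set (Sym2 ℕ) :=
  {s(1, 2), s(1, 5), s(1, 6), s(1, 7), s(2, 3), s(2, 5), s(2, 6), s(2, 7), s(3, 4), s(3, 5), s(3, 6), s(4, 5), s(4, 6)}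

/-- `M` has graph G1069: for `i ≠ j`, `M i j ≠ 0` iff `{i+1, j+1}` is an edge of G1069. -/
def HasGraphG1069 (M : Matrix (Fin 7) (Fin 7) ℂ) : Prop :=
  ∀ i j : Fin 7, i ≠ j → (M i j ≠ 0 ↔ s((i : ℕ) + 1, (j : ℕ) + 1) ∈ edgesG1069)

/-- A 4×7 matrix whose Gram matrix realizes G1069. -/
noncomputable def AmatG : Matrix (Fin 4) (Fin 7) ℂ :=
  !![1,1,1,1,1,0,0; -1,1,1,1,0,1,0; 1,1,0,0,0,0,1; 0,-2,-1,1,0,0,0]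

/-- The Gram matrix of the columns of `AmatG`. -/
noncomputable def MexG : Matrix (Fin 7) (Fin 7) ℂ :=
  !![3,1,0,0,1,-1,1;
     1,7,4,0,1,1,1;
     0,4,3,1,1,1,0;
     0,0,1,3,1,1,0;
     1,1,1,1,1,0,0;
     -1,1,1,1,0,1,0;
     1,1,0,0,0,0,1]

/-- Column selector picking columns 4, 5, 6, 1. -/
noncomputable def QselG : Matrix (Fin 7) (Fin 4) ℂ :=
  !![0,0,0,0; 0,0,0,1; 0,0,0,0; 0,0,0,0; 1,0,0,0; 0,1,0,0; 0,0,1,0]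

lemma gramG : MexG = AmatGᴴ * AmatG := by
  ext i j
  fin_cases i <;> fin_cases j <;>
    norm_num [MexG, AmatG, Matrix.mul_apply, Matrix.conjTranspose_apply, Fin.sum_univ_succ,
      Complex.conj_ofNat]

lemma posSemidefMexG : MexG.PosSemidef := by
  rw [gramG]; exact Matrix.posSemidef_conjTranspose_mul_self _

lemma rankMexG : MexG.rank = 4 := by
  rw [gramG, Matrix.rank_conjTranspose_mul_self]
  refine le_antisymm (AmatG.rank_le_card_height.trans (by simp)) ?_
  have hB : AmatG * QselG = !![1,0,0,1; 0,1,0,1; 0,0,1,1; 0,0,0,-2] := by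
    ext i j
    fin_cases i <;> fin_cases j <;>
      norm_num [AmatG, QselG, Matrix.mul_apply, Fin.sum_univ_succ]
  have hdet : (AmatG * QselG).det ≠ 0 := by
    rw [hB]; simp [Matrix.det_succ_row_zero, Fin.sum_univ_succ]
  have h4 : (AmatG * QselG).rank = 4 := by
    rw [Matrix.rank_of_isUnit _ ((Matrix.isUnit_iff_isUnit_det _).mpr
      (isUnit_iff_ne_zero.mpr hdet))]
    simp
  calc (4 : ℕ) = (AmatG * QselG).rank := h4.symm
    _ ≤ AmatG.rank := Matrix.rank_mul_le_left _ _

set_option maxHeartbeats 1000000 in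
lemma hasGraphMexG : HasGraphG1069 MexG := by
  intro i j hij
  fin_cases i <;> fin_cases j <;>
    first
    | exact absurd rfl hij
    | (norm_num [MexG]
       simp only [edgesG1069, Set.mem_insert_iff, Set.mem_singleton_iff]
       decide)

/-- Row selector picking rows 6, 0, 1, 2. -/
noncomputable def PselG : Matrix (Fin 4) (Fin 7) ℂ :=
  !![0,0,0,0,0,0,1; 1,0,0,0,0,0,0; 0,1,0,0,0,0,0; 0,0,1,0,0,0,0]

/-- Column selector picking columns 6, 4, 2, 3. -/
noncomputable def QselG' : Matrix (Fin 7) (Fin 4) ℂ :=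
  !![0,0,0,0; 0,0,0,0; 0,0,1,0; 0,0,0,1; 0,1,0,0; 0,0,0,0; 1,0,0,0]

/-- msr(G1069) = 4. -/
theorem msr_G1069 :
    (∃ M : Matrix (Fin 7) (Fin 7) ℂ, M.PosSemidef ∧ HasGraphG1069 M ∧ M.rank = 4) ∧
    (∀ M : Matrix (Fin 7) (Fin 7) ℂ, M.PosSemidef → HasGraphG1069 M → 4 ≤ M.rank) := by
  constructor
  · exact ⟨MexG, posSemidefMexG, hasGraphMexG, rankMexG⟩
  · intro M hPSD hG
    -- nonzero entries from edges
    have e06 : M 0 6 ≠ 0 := (hG 0 6 (by decide)).mpr (by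
      simp only [edgesG1069, Set.mem_insert_iff, Set.mem_singleton_iff]; decide)
    have e04 : M 0 4 ≠ 0 := (hG 0 4 (by decide)).mpr (by
      simp only [edgesG1069, Set.mem_insert_iff, Set.mem_singleton_iff]; decide)
    have e12 : M 1 2 ≠ 0 := (hG 1 2 (by decide)).mpr (by
      simp only [edgesG1069, Set.mem_insert_iff, Set.mem_singleton_iff]; decide)
    have e23 : M 2 3 ≠ 0 := (hG 2 3 (by decide)).mpr (by
      simp only [edgesG1069, Set.mem_insert_iff, Set.mem_singleton_iff]; decide)
    -- zero entries from non-edges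
    have z64 : M 6 4 = 0 := by
      by_contra h
      exact absurd ((hG 6 4 (by decide)).mp h) (by
        simp only [edgesG1069, Set.mem_insert_iff, Set.mem_singleton_iff]; decide)
    have z62 : M 6 2 = 0 := by
      by_contra h
      exact absurd ((hG 6 2 (by decide)).mp h) (by
        simp only [edgesG1069, Set.mem_insert_iff, Set.mem_singleton_iff]; decide)
    have z63 : M 6 3 = 0 := by
      by_contra h
      exact absurd ((hG 6 3 (by decide)).mp h) (by
        simp only [edgesG1069, Set.mem_insert_iff, Set.mem_singleton_iff]; decide)
    have z02 : M 0 2 = 0 := by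
      by_contra h
      exact absurd ((hG 0 2 (by decide)).mp h) (by
        simp only [edgesG1069, Set.mem_insert_iff, Set.mem_singleton_iff]; decide)
    have z03 : M 0 3 = 0 := by
      by_contra h
      exact absurd ((hG 0 3 (by decide)).mp h) (by
        simp only [edgesG1069, Set.mem_insert_iff, Set.mem_singleton_iff]; decide)
    have z13 : M 1 3 = 0 := by
      by_contra h
      exact absurd ((hG 1 3 (by decide)).mp h) (by
        simp only [edgesG1069, Set.mem_insert_iff, Set.mem_singleton_iff]; decide)
    -- the diagonal entry M 6 6 is nonzero, since row 6 is nonzero and M is PSD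
    have e66 : M 6 6 ≠ 0 := by
      intro h0
      have h1 : star (Pi.single 6 1 : Fin 7 → ℂ) ⬝ᵥ M *ᵥ (Pi.single 6 1) = 0 := by
        simp [dotProduct, mulVec, Pi.single_apply, Fin.sum_univ_succ, h0]
      have h2 := (hPSD.dotProduct_mulVec_zero_iff (Pi.single 6 1)).mp h1
      have h3 := congrFun h2 0
      simp [mulVec, dotProduct, Pi.single_apply, Fin.sum_univ_succ] at h3
      exact e06 h3
    -- the 4×4 submatrix with rows (6,0,1,2) and columns (6,4,2,3)
    have hNval : PselG * M * QselG' =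
        !![M 6 6, M 6 4, M 6 2, M 6 3;
           M 0 6, M 0 4, M 0 2, M 0 3;
           M 1 6, M 1 4, M 1 2, M 1 3;
           M 2 6, M 2 4, M 2 2, M 2 3] := by
      ext i j
      fin_cases i <;> fin_cases j <;>
        simp [PselG, QselG', Matrix.mul_apply, Matrix.vecMul, dotProduct, Fin.sum_univ_succ] <;>
        rfl
    have hdet : (PselG * M * QselG').det ≠ 0 := by
      rw [hNval]
      rw [show !![M 6 6, M 6 4, M 6 2, M 6 3;
           M 0 6, M 0 4, M 0 2, M 0 3;
           M 1 6, M 1 4, M 1 2, M 1 3;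
           M 2 6, M 2 4, M 2 2, M 2 3] =
          !![M 6 6, 0, 0, 0;
           M 0 6, M 0 4, 0, 0;
           M 1 6, M 1 4, M 1 2, 0;
           M 2 6, M 2 4, M 2 2, M 2 3] by rw [z64, z62, z63, z02, z03, z13]]
      have : (!![M 6 6, 0, 0, 0;
           M 0 6, M 0 4, 0, 0;
           M 1 6, M 1 4, M 1 2, 0;
           M 2 6, M 2 4, M 2 2, M 2 3]).det = M 6 6 * (M 0 4 * (M 1 2 * M 2 3)) := by
        simp [Matrix.det_succ_row_zero, Fin.sum_univ_succ]
        try ring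
      rw [this]
      exact mul_ne_zero e66 (mul_ne_zero e04 (mul_ne_zero e12 e23))
    have h4 : (PselG * M * QselG').rank = 4 := by
      rw [Matrix.rank_of_isUnit _ ((Matrix.isUnit_iff_isUnit_det _).mpr
        (isUnit_iff_ne_zero.mpr hdet))]
      simp
    calc (4 : ℕ) = (PselG * M * QselG').rank := h4.symm
      _ ≤ (PselG * M).rank := Matrix.rank_mul_le_left _ _
      _ ≤ M.rank := Matrix.rank_mul_le_right _ _
end

section
/- Let G be the simple graph on vertex set {1,...,7} with edge set E = {{1,2},{1,6},{1,7},{2,3},{2,4},{2,6},{2,7},{3,5},{3,6},{4,5},{4,6},{5,6},{5,7}} (the graph G1084 of the atlas). Then msr(G) = 4; that is, there exists a 7×7 Hermitian positive semidefinite complex matrix with graph G of rank 4, and every 7×7 Hermitian positive semidefinite complex matrix with graph G has rank at least 4. -/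
open Matrix ComplexOrder

/-- The edge set of the graph G1084 on vertices 1,...,7. -/
def edgesG1084 : Set (Sym2 ℕ) :=
  {s(1, 2), s(1, 6), s(1, 7), s(2, 3), s(2, 4), s(2, 6), s(2, 7), s(3, 5), s(3, 6), s(4, 5), s(4, 6), s(5, 6), s(5, 7)}

/-- `M` has graph G1084: for `i ≠ j`, `M i j ≠ 0` iff `{i+1, j+1}` is an edge of G1084. -/
def HasGraphG1084 (M : Matrix (Fin 7) (Fin 7) ℂ) : Prop :=
  ∀ i j : Fin 7, i ≠ j → (M i j ≠ 0 ↔ s((i : ℕ) + 1, (j : ℕ) + 1) ∈ edgesG1084)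

/-- Columns are Gram vectors of a rank-4 realization. -/
def Amsr : Matrix (Fin 4) (Fin 7) ℂ :=
  !![0,1,1,0,1,1,0; 0,1,0,1,1,1,0; 1,1,0,0,1,1,0; 1,3,0,0,-1,0,1]

/-- Row selector (rows 1,2,4,7, i.e. indices 0,1,3,6). -/
def Qmsr : Matrix (Fin 4) (Fin 7) ℂ :=
  !![1,0,0,0,0,0,0; 0,1,0,0,0,0,0; 0,0,0,1,0,0,0; 0,0,0,0,0,0,1]

/-- Column selector (columns 2,3,4,5, i.e. indices 1,2,3,4). -/
def Pmsr : Matrix (Fin 7) (Fin 4) ℂ :=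
  !![0,0,0,0; 1,0,0,0; 0,1,0,0; 0,0,1,0; 0,0,0,1; 0,0,0,0; 0,0,0,0]

set_option maxHeartbeats 1000000 in
lemma lb_G1084 (M : Matrix (Fin 7) (Fin 7) ℂ) (hP : M.PosSemidef) (hM : HasGraphG1084 M) :
    4 ≤ M.rank := by
  have z : ∀ i j : Fin 7, i ≠ j → s((i : ℕ) + 1, (j : ℕ) + 1) ∉ edgesG1084 → M i j = 0 := by
    intro i j hij hne
    by_contra h
    exact hne ((hM i j hij).mp h)
  have nedge : ∀ i j : Fin 7, i ≠ j → s((i : ℕ) + 1, (j : ℕ) + 1) ∈ edgesG1084 → M i j ≠ 0 :=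
    fun i j hij he => (hM i j hij).mpr he
  have z02 : M 0 2 = 0 := z 0 2 (by decide) (by
    simp only [edgesG1084, Set.mem_insert_iff, Set.mem_singleton_iff]; decide)
  have z03 : M 0 3 = 0 := z 0 3 (by decide) (by
    simp only [edgesG1084, Set.mem_insert_iff, Set.mem_singleton_iff]; decide)
  have z04 : M 0 4 = 0 := z 0 4 (by decide) (by
    simp only [edgesG1084, Set.mem_insert_iff, Set.mem_singleton_iff]; decide)
  have z14 : M 1 4 = 0 := z 1 4 (by decide) (by
    simp only [edgesG1084, Set.mem_insert_iff, Set.mem_singleton_iff]; decide)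
  have z32 : M 3 2 = 0 := z 3 2 (by decide) (by
    simp only [edgesG1084, Set.mem_insert_iff, Set.mem_singleton_iff]; decide)
  have z62 : M 6 2 = 0 := z 6 2 (by decide) (by
    simp only [edgesG1084, Set.mem_insert_iff, Set.mem_singleton_iff]; decide)
  have z63 : M 6 3 = 0 := z 6 3 (by decide) (by
    simp only [edgesG1084, Set.mem_insert_iff, Set.mem_singleton_iff]; decide)
  have n01 : M 0 1 ≠ 0 := nedge 0 1 (by decide) (by
    simp only [edgesG1084, Set.mem_insert_iff, Set.mem_singleton_iff]; decide)
  have n12 : M 1 2 ≠ 0 := nedge 1 2 (by decide) (by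
    simp only [edgesG1084, Set.mem_insert_iff, Set.mem_singleton_iff]; decide)
  have n64 : M 6 4 ≠ 0 := nedge 6 4 (by decide) (by
    simp only [edgesG1084, Set.mem_insert_iff, Set.mem_singleton_iff]; decide)
  have n43 : M 4 3 ≠ 0 := nedge 4 3 (by decide) (by
    simp only [edgesG1084, Set.mem_insert_iff, Set.mem_singleton_iff]; decide)
  -- diagonal entry M 3 3 is nonzero
  have n33 : M 3 3 ≠ 0 := by
    intro h33
    have hx : star (Pi.single (3 : Fin 7) (1 : ℂ)) ⬝ᵥ M *ᵥ Pi.single (3 : Fin 7) (1 : ℂ)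
        = M 3 3 := by
      simp [dotProduct, mulVec, Pi.single_apply, Fin.sum_univ_seven]
    have h0 : M *ᵥ Pi.single (3 : Fin 7) (1 : ℂ) = 0 := by
      rw [← hP.dotProduct_mulVec_zero_iff]
      rw [hx, h33]
    have h43 : (M *ᵥ Pi.single (3 : Fin 7) (1 : ℂ)) 4 = M 4 3 := by
      simp [mulVec, dotProduct, Pi.single_apply, Fin.sum_univ_seven]
    rw [h0] at h43
    exact n43 h43.symm
  -- the 4×4 submatrix N = Q * M * P
  set N : Matrix (Fin 4) (Fin 4) ℂ := Qmsr * M * Pmsr with hNdef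
  have hNentries : N = !![M 0 1, M 0 2, M 0 3, M 0 4;
                          M 1 1, M 1 2, M 1 3, M 1 4;
                          M 3 1, M 3 2, M 3 3, M 3 4;
                          M 6 1, M 6 2, M 6 3, M 6 4] := by
    ext i j
    fin_cases i <;> fin_cases j <;>
      simp [hNdef, Qmsr, Pmsr, Matrix.mul_apply, Matrix.vecMul, dotProduct, Fin.sum_univ_succ, Matrix.cons_val_zero, Matrix.cons_val_succ] <;> rfl
  have hNdet : N.det ≠ 0 := by
    have hNval : N.det = M 0 1 * (M 1 2 * (M 3 3 * M 6 4)) := by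
      rw [hNentries, z02, z03, z04, z14, z32, z62, z63]
      simp [Matrix.det_succ_row_zero, Fin.sum_univ_succ]
    rw [hNval]
    exact mul_ne_zero n01 (mul_ne_zero n12 (mul_ne_zero n33 n64))
  have hNrank : N.rank = 4 := by
    rw [Matrix.rank_of_isUnit N ((Matrix.isUnit_iff_isUnit_det N).mpr hNdet.isUnit)]
    simp
  calc (4 : ℕ) = N.rank := hNrank.symm
    _ ≤ (Qmsr * M).rank := Matrix.rank_mul_le_left (Qmsr * M) Pmsr
    _ ≤ M.rank := Matrix.rank_mul_le_right Qmsr M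


/-- The Gram matrix `Amsrᴴ * Amsr`. -/
def Mg : Matrix (Fin 7) (Fin 7) ℂ :=
  !![2,4,0,0,0,1,1; 4,12,1,1,0,3,3; 0,1,1,0,1,1,0; 0,1,0,1,1,1,0; 0,0,1,1,4,3,-1; 1,3,1,1,3,3,0; 1,3,0,0,-1,0,1]

set_option maxHeartbeats 1000000 in
lemma Mg_eq : Amsrᴴ * Amsr = Mg := by
  ext i j
  fin_cases i <;> fin_cases j <;>
    norm_num [Amsr, Mg, Matrix.mul_apply, Matrix.conjTranspose_apply, Fin.sum_univ_four,
      Matrix.vecHead, Matrix.vecTail, Function.comp, map_ofNat, Matrix.cons_val_two,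
        Matrix.cons_val_three]

set_option maxHeartbeats 2000000 in
lemma Mg_graph : HasGraphG1084 Mg := by
  intro i j hij
  fin_cases i <;> fin_cases j <;>
    first
      | exact absurd rfl hij
      | (refine iff_of_true ?_ ?_
         · norm_num [Mg, Matrix.vecHead, Matrix.vecTail, Function.comp]
         · simp only [edgesG1084, Set.mem_insert_iff, Set.mem_singleton_iff]; decide)
      | (refine iff_of_false ?_ ?_
         · norm_num [Mg, Matrix.vecHead, Matrix.vecTail, Function.comp]
         · simp only [edgesG1084, Set.mem_insert_iff, Set.mem_singleton_iff]; decide)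

/-- msr(G1084) = 4. -/
theorem msr_G1084 :
    (∃ M : Matrix (Fin 7) (Fin 7) ℂ, M.PosSemidef ∧ HasGraphG1084 M ∧ M.rank = 4) ∧
    (∀ M : Matrix (Fin 7) (Fin 7) ℂ, M.PosSemidef → HasGraphG1084 M → 4 ≤ M.rank) := by
  refine ⟨⟨Mg, ?_, Mg_graph, ?_⟩, lb_G1084⟩
  · rw [← Mg_eq]
    exact Matrix.posSemidef_conjTranspose_mul_self Amsr
  · have hps : Mg.PosSemidef := by
      rw [← Mg_eq]; exact Matrix.posSemidef_conjTranspose_mul_self Amsr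
    have h1 : 4 ≤ Mg.rank := lb_G1084 Mg hps Mg_graph
    have h2 : Mg.rank ≤ 4 := by
      rw [← Mg_eq, Matrix.rank_conjTranspose_mul_self]
      simpa using Matrix.rank_le_card_height Amsr
    omega
end

section
/- Let G be the simple graph on vertex set {1,...,7} with edge set E = {{1,2},{1,6},{1,7},{2,3},{2,6},{2,7},{3,4},{3,5},{3,6},{4,5},{4,6},{4,7},{5,6}} (the graph G1091 of the atlas). Then msr(G) = 4; that is, there exists a 7×7 Hermitian positive semidefinite complex matrix with graph G of rank 4, and every 7×7 Hermitian positive semidefinite complex matrix with graph G has rank at least 4. -/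
open Matrix ComplexOrder

/-- The edge set of the graph G1091 on vertices 1,...,7. -/
def edgesG1091 : Set (Sym2 ℕ) :=
  {s(1, 2), s(1, 6), s(1, 7), s(2, 3), s(2, 6), s(2, 7), s(3, 4), s(3, 5), s(3, 6), s(4, 5), s(4, 6), s(4, 7), s(5, 6)}

/-- `M` has graph G1091: for `i ≠ j`, `M i j ≠ 0` iff `{i+1, j+1}` is an edge of G1091. -/
def HasGraphG1091 (M : Matrix (Fin 7) (Fin 7) ℂ) : Prop :=
  ∀ i j : Fin 7, i ≠ j → (M i j ≠ 0 ↔ s((i : ℕ) + 1, (j : ℕ) + 1) ∈ edgesG1091)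

/-- Rank of a principal submatrix is at most the rank. -/
lemma auxG1091_rank_submatrix_le (M : Matrix (Fin 7) (Fin 7) ℂ) (e : Fin 4 → Fin 7) :
    (M.submatrix e e).rank ≤ M.rank := by
  have h1 : ((1 : Matrix (Fin 7) (Fin 7) ℂ).submatrix e (Equiv.refl (Fin 7))) * M
      = M.submatrix e id := by
    rw [one_submatrix_mul]; rfl
  have h2 : (M.submatrix e id) * ((1 : Matrix (Fin 7) (Fin 7) ℂ).submatrix (Equiv.refl (Fin 7)) e)
      = M.submatrix e e := by
    rw [mul_submatrix_one]
    simp [submatrix_submatrix]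
  calc (M.submatrix e e).rank
      = ((M.submatrix e id) * ((1 : Matrix (Fin 7) (Fin 7) ℂ).submatrix (Equiv.refl (Fin 7)) e)).rank := by
        rw [h2]
    _ ≤ (M.submatrix e id).rank := rank_mul_le_left _ _
    _ = (((1 : Matrix (Fin 7) (Fin 7) ℂ).submatrix e (Equiv.refl (Fin 7))) * M).rank := by rw [h1]
    _ ≤ M.rank := rank_mul_le_right _ _

/-- In a PSD matrix, a nonzero entry in a column forces a nonzero diagonal entry. -/
lemma auxG1091_diag_ne {M : Matrix (Fin 7) (Fin 7) ℂ} (hM : M.PosSemidef)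
    {i j : Fin 7} (hji : M j i ≠ 0) : M i i ≠ 0 := by
  intro hii
  set u : Fin 7 → ℂ := fun t => if t = i then 1 else 0 with hu
  have hform : star u ⬝ᵥ (M *ᵥ u) = 0 := by
    rw [dotProduct]
    rw [Finset.sum_eq_single_of_mem i (Finset.mem_univ _) ?_]
    · rw [Pi.star_apply, mulVec, dotProduct,
        Finset.sum_eq_single_of_mem i (Finset.mem_univ _) ?_]
      · simp [hu, hii]
      · intro s _ hs; simp [hu, hs]
    · intro s _ hs; simp [hu, hs]
  have := (hM.dotProduct_mulVec_zero_iff u).mp hform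
  have hk := congrFun this j
  rw [mulVec, dotProduct, Finset.sum_eq_single_of_mem i (Finset.mem_univ _)
    (by intro s _ hs; simp [hu, hs])] at hk
  simp [hu] at hk
  exact hji hk

/-- The key nondegeneracy lemma: a degenerate 2×2 principal minor forces proportionality
of the corresponding columns, contradicting the zero/nonzero pattern at row `k`. -/
lemma auxG1091_key {M : Matrix (Fin 7) (Fin 7) ℂ} (hM : M.PosSemidef)
    (i j k : Fin 7) (hij : i ≠ j) (hkj : M k j = 0) (hki : M k i ≠ 0) (hjj : M j j ≠ 0) :
    M i i * M j j - M i j * M j i ≠ 0 := by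
  intro hdet
  set u : Fin 7 → ℂ := fun t => if t = i then M j j else if t = j then -(M j i) else 0 with hu
  have hui : u i = M j j := by simp [hu]
  have huj : u j = -(M j i) := by simp [hu, Ne.symm hij]
  have hMu : ∀ t, (M *ᵥ u) t = M t i * M j j - M t j * M j i := by
    intro t
    rw [mulVec, dotProduct]
    rw [Finset.sum_eq_add_of_mem i j (Finset.mem_univ _) (Finset.mem_univ _) hij ?_]
    · rw [hui, huj]; ring
    · intro s _ hs
      simp [hu, hs.1, hs.2]
  have hji : M j i = star (M i j) := by rw [hM.isHermitian.apply]
  have hjj' : star (M j j) = M j j := hM.isHermitian.apply j j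
  have hform : star u ⬝ᵥ (M *ᵥ u) = 0 := by
    rw [dotProduct]
    rw [Finset.sum_eq_add_of_mem i j (Finset.mem_univ _) (Finset.mem_univ _) hij ?_]
    · rw [Pi.star_apply, Pi.star_apply, hui, huj, hMu i, hMu j]
      rw [hji]
      simp only [star_neg, star_star, hjj']
      rw [show M i i * M j j - M i j * star (M i j) = 0 from hji ▸ hdet]
      ring
    · intro s _ hs
      simp [hu, hs.1, hs.2]
  have := (hM.dotProduct_mulVec_zero_iff u).mp hform
  have hk := congrFun this k
  rw [hMu k, hkj] at hk
  simp at hk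
  rcases hk with h | h
  · exact hki h
  · exact hjj h

/-- The lower bound: any PSD matrix with graph G1091 has rank at least 4. -/
lemma auxG1091_lower (M : Matrix (Fin 7) (Fin 7) ℂ) (hM : M.PosSemidef)
    (hG : HasGraphG1091 M) : 4 ≤ M.rank := by
  -- zero entries from non-edges
  have hz : ∀ i j : Fin 7, i ≠ j → s((i : ℕ) + 1, (j : ℕ) + 1) ∉ edgesG1091 → M i j = 0 := by
    intro i j hij hn
    by_contra h
    exact hn ((hG i j hij).mp h)
  have h02 : M 0 2 = 0 := hz 0 2 (by decide) (by
    simp only [edgesG1091, Set.mem_insert_iff, Set.mem_singleton_iff, Sym2.eq_iff]; decide)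
  have h20 : M 2 0 = 0 := hz 2 0 (by decide) (by
    simp only [edgesG1091, Set.mem_insert_iff, Set.mem_singleton_iff, Sym2.eq_iff]; decide)
  have h04 : M 0 4 = 0 := hz 0 4 (by decide) (by
    simp only [edgesG1091, Set.mem_insert_iff, Set.mem_singleton_iff, Sym2.eq_iff]; decide)
  have h40 : M 4 0 = 0 := hz 4 0 (by decide) (by
    simp only [edgesG1091, Set.mem_insert_iff, Set.mem_singleton_iff, Sym2.eq_iff]; decide)
  have h26 : M 2 6 = 0 := hz 2 6 (by decide) (by
    simp only [edgesG1091, Set.mem_insert_iff, Set.mem_singleton_iff, Sym2.eq_iff]; decide)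
  have h62 : M 6 2 = 0 := hz 6 2 (by decide) (by
    simp only [edgesG1091, Set.mem_insert_iff, Set.mem_singleton_iff, Sym2.eq_iff]; decide)
  have h46 : M 4 6 = 0 := hz 4 6 (by decide) (by
    simp only [edgesG1091, Set.mem_insert_iff, Set.mem_singleton_iff, Sym2.eq_iff]; decide)
  have h64 : M 6 4 = 0 := hz 6 4 (by decide) (by
    simp only [edgesG1091, Set.mem_insert_iff, Set.mem_singleton_iff, Sym2.eq_iff]; decide)
  have h56 : M 5 6 = 0 := hz 5 6 (by decide) (by
    simp only [edgesG1091, Set.mem_insert_iff, Set.mem_singleton_iff, Sym2.eq_iff]; decide)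
  have h14 : M 1 4 = 0 := hz 1 4 (by decide) (by
    simp only [edgesG1091, Set.mem_insert_iff, Set.mem_singleton_iff, Sym2.eq_iff]; decide)
  -- nonzero entries from edges
  have h06 : M 0 6 ≠ 0 := (hG 0 6 (by decide)).mpr (by
    simp only [edgesG1091, Set.mem_insert_iff, Set.mem_singleton_iff, Sym2.eq_iff]; decide)
  have h24 : M 2 4 ≠ 0 := (hG 2 4 (by decide)).mpr (by
    simp only [edgesG1091, Set.mem_insert_iff, Set.mem_singleton_iff, Sym2.eq_iff]; decide)
  have h50 : M 5 0 ≠ 0 := (hG 5 0 (by decide)).mpr (by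
    simp only [edgesG1091, Set.mem_insert_iff, Set.mem_singleton_iff, Sym2.eq_iff]; decide)
  have h12 : M 1 2 ≠ 0 := (hG 1 2 (by decide)).mpr (by
    simp only [edgesG1091, Set.mem_insert_iff, Set.mem_singleton_iff, Sym2.eq_iff]; decide)
  -- nonzero diagonal entries
  have h66 : M 6 6 ≠ 0 := auxG1091_diag_ne hM h06
  have h44 : M 4 4 ≠ 0 := auxG1091_diag_ne hM h24
  -- the two nondegenerate 2×2 minors
  have key1 : M 0 0 * M 6 6 - M 0 6 * M 6 0 ≠ 0 :=
    auxG1091_key hM 0 6 5 (by decide) h56 h50 h66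
  have key2 : M 2 2 * M 4 4 - M 2 4 * M 4 2 ≠ 0 :=
    auxG1091_key hM 2 4 1 (by decide) h14 h12 h44
  -- the 4×4 principal submatrix on rows/columns {0,2,4,6}
  set e : Fin 4 → Fin 7 := ![0, 2, 4, 6] with he
  set N : Matrix (Fin 4) (Fin 4) ℂ := M.submatrix e e with hNdef
  have hN : N = !![M 0 0, 0, 0, M 0 6; 0, M 2 2, M 2 4, 0; 0, M 4 2, M 4 4, 0;
      M 6 0, 0, 0, M 6 6] := by
    ext i j
    fin_cases i <;> fin_cases j <;>
      simp [hNdef, he, h02, h20, h04, h40, h26, h62, h46, h64]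
  have hdet : N.det = (M 0 0 * M 6 6 - M 0 6 * M 6 0) * (M 2 2 * M 4 4 - M 2 4 * M 4 2) := by
    rw [hN]
    simp [Matrix.det_succ_row_zero, Fin.sum_univ_succ]
    rw [show (![(0:ℂ), M 4 2, M 4 4, 0] (Fin.succAbove 3 2) : ℂ) = M 4 4 from rfl,
        show (![(0:ℂ), M 2 2, M 2 4, 0] (Fin.succAbove 3 2) : ℂ) = M 2 4 from rfl]
    ring
  have hdet0 : N.det ≠ 0 := by
    rw [hdet]; exact mul_ne_zero key1 key2
  have hrankN : N.rank = 4 := by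
    rw [Matrix.rank_of_isUnit N ((Matrix.isUnit_iff_isUnit_det N).mpr
      (isUnit_iff_ne_zero.mpr hdet0))]
    simp
  calc (4 : ℕ) = N.rank := hrankN.symm
    _ ≤ M.rank := auxG1091_rank_submatrix_le M e


lemma auxG1091_cons_val_three {α : Type*} {m : ℕ} (x : α) (u : Fin (m+3) → α) :
    Matrix.vecCons x u 3 = Matrix.vecHead (Matrix.vecTail (Matrix.vecTail u)) := rfl
lemma auxG1091_cons_val_four {α : Type*} {m : ℕ} (x : α) (u : Fin (m+4) → α) :
    Matrix.vecCons x u 4 =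
      Matrix.vecHead (Matrix.vecTail (Matrix.vecTail (Matrix.vecTail u))) := rfl
lemma auxG1091_cons_val_five {α : Type*} {m : ℕ} (x : α) (u : Fin (m+5) → α) :
    Matrix.vecCons x u 5 =
      Matrix.vecHead (Matrix.vecTail (Matrix.vecTail (Matrix.vecTail (Matrix.vecTail u)))) := rfl
lemma auxG1091_cons_val_six {α : Type*} {m : ℕ} (x : α) (u : Fin (m+6) → α) :
    Matrix.vecCons x u 6 =
      Matrix.vecHead (Matrix.vecTail (Matrix.vecTail (Matrix.vecTail (Matrix.vecTail
        (Matrix.vecTail u))))) := rfl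

/-- An explicit 4×7 matrix whose Gram matrix realizes G1091. -/
def auxG1091_B : Matrix (Fin 4) (Fin 7) ℂ :=
  !![1, 1, 0, 0, 0, 1, 1;
     0, 1, 0, 1, 0, -1, 1;
     0, 1, 1, 1, 1, 1, 0;
     0, -1, 0, 2, 1, 2, 0]

/-- The Gram matrix of the columns of `auxG1091_B`. -/
def auxG1091_M : Matrix (Fin 7) (Fin 7) ℂ :=
  !![1, 1, 0, 0, 0, 1, 1;
     1, 4, 1, 0, 0, -1, 2;
     0, 1, 1, 1, 1, 1, 0;
     0, 0, 1, 6, 3, 4, 1;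
     0, 0, 1, 3, 2, 3, 0;
     1, -1, 1, 4, 3, 7, 0;
     1, 2, 0, 1, 0, 0, 2]

set_option maxHeartbeats 2000000 in
lemma auxG1091_M_eq : auxG1091_M = auxG1091_Bᴴ * auxG1091_B := by
  ext i j
  fin_cases i <;> fin_cases j <;>
    simp [auxG1091_M, auxG1091_B, Matrix.mul_apply, Fin.sum_univ_four,
      Matrix.conjTranspose_apply, auxG1091_cons_val_three, auxG1091_cons_val_four,
      auxG1091_cons_val_five, auxG1091_cons_val_six, Matrix.vecHead, Matrix.vecTail] <;>
    norm_num [map_ofNat]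

lemma auxG1091_M_posSemidef : auxG1091_M.PosSemidef := by
  rw [auxG1091_M_eq]
  exact posSemidef_conjTranspose_mul_self _

set_option maxHeartbeats 2000000 in
lemma auxG1091_M_hasGraph : HasGraphG1091 auxG1091_M := by
  intro i j hij
  fin_cases i <;> fin_cases j <;>
  · first
    | exact absurd rfl hij
    | (simp only [auxG1091_M, edgesG1091, Set.mem_insert_iff, Set.mem_singleton_iff,
        Sym2.eq_iff, Matrix.cons_val', Matrix.cons_val_zero, Matrix.cons_val_one,
        Matrix.head_cons, Matrix.head_fin_const, Matrix.empty_val', Matrix.cons_val_fin_one,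
        Matrix.of_apply, auxG1091_cons_val_three, auxG1091_cons_val_four,
        auxG1091_cons_val_five, auxG1091_cons_val_six, Matrix.vecHead, Matrix.vecTail,
        Function.comp_apply]
       norm_num)

/-- msr(G1091) = 4. -/
theorem msr_G1091 :
    (∃ M : Matrix (Fin 7) (Fin 7) ℂ, M.PosSemidef ∧ HasGraphG1091 M ∧ M.rank = 4) ∧
    (∀ M : Matrix (Fin 7) (Fin 7) ℂ, M.PosSemidef → HasGraphG1091 M → 4 ≤ M.rank) := by
  constructor
  · refine ⟨auxG1091_M, auxG1091_M_posSemidef, auxG1091_M_hasGraph, le_antisymm ?_ ?_⟩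
    · rw [auxG1091_M_eq, rank_conjTranspose_mul_self]
      exact (rank_le_card_height _).trans (by simp)
    · exact auxG1091_lower _ auxG1091_M_posSemidef auxG1091_M_hasGraph
  · exact auxG1091_lower
end

section
/- Let G be the simple graph on vertex set {1,...,7} with edge set E = {{1,2},{1,5},{1,6},{1,7},{2,3},{2,7},{3,4},{3,7},{4,5},{4,6},{4,7},{5,6},{6,7}} (the graph G1097 of the atlas). Then msr(G) = 4; that is, there exists a 7×7 Hermitian positive semidefinite complex matrix with graph G of rank 4, and every 7×7 Hermitian positive semidefinite complex matrix with graph G has rank at least 4. -/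
open Matrix ComplexOrder

/-- The edge set of the graph G1097 on vertices 1,...,7. -/
def edgesG1097 : Set (Sym2 ℕ) :=
  {s(1, 2), s(1, 5), s(1, 6), s(1, 7), s(2, 3), s(2, 7), s(3, 4), s(3, 7), s(4, 5), s(4, 6), s(4, 7), s(5, 6), s(6, 7)}

/-- `M` has graph G1097: for `i ≠ j`, `M i j ≠ 0` iff `{i+1, j+1}` is an edge of G1097. -/
def HasGraphG1097 (M : Matrix (Fin 7) (Fin 7) ℂ) : Prop :=
  ∀ i j : Fin 7, i ≠ j → (M i j ≠ 0 ↔ s((i : ℕ) + 1, (j : ℕ) + 1) ∈ edgesG1097)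

lemma msr_diag_ne {M : Matrix (Fin 7) (Fin 7) ℂ} (hM : M.PosSemidef) {j k : Fin 7}
    (h : M j k ≠ 0) : M k k ≠ 0 := by
  intro h0
  have hform : star (Pi.single k (1:ℂ)) ⬝ᵥ M *ᵥ Pi.single k 1 = 0 := by
    simp [dotProduct, Matrix.mulVec, Pi.single_apply, Finset.sum_ite_eq', h0]
  have h1 := (hM.dotProduct_mulVec_zero_iff _).mp hform
  have h2 := congrFun h1 j
  simp [Matrix.mulVec, dotProduct, Pi.single_apply, Finset.sum_ite_eq'] at h2
  exact h h2

lemma msr_det2_ne {M : Matrix (Fin 7) (Fin 7) ℂ} (hM : M.PosSemidef) {i j k : Fin 7}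
    (hij : M i j ≠ 0) (hik : M i k = 0) (hjk : M j k ≠ 0) :
    M j j * M k k - M j k * M k j ≠ 0 := by
  intro hd
  set y : Fin 7 → ℂ := Pi.single j (M k k) + Pi.single k (-(M k j)) with hy
  have hkk : (starRingEnd ℂ) (M k k) = M k k := by
    have := congrFun (congrFun hM.1 k) k; simpa using this
  have hkj : (starRingEnd ℂ) (M k j) = M j k := by
    have := congrFun (congrFun hM.1 j) k; simpa using this
  have hv : M *ᵥ y = fun p => M p j * M k k - M p k * M k j := by
    ext p
    simp [hy, Matrix.mulVec, dotProduct, Pi.single_apply, mul_ite, mul_add,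
      Finset.sum_add_distrib, Finset.sum_ite_eq', mul_neg]
    ring
  have hform : star y ⬝ᵥ M *ᵥ y = 0 := by
    rw [hv]
    simp only [hy, dotProduct, Pi.star_apply, Pi.add_apply, Pi.single_apply,
      Complex.star_def, map_add, apply_ite (starRingEnd ℂ), map_zero, map_neg, add_mul,
      Finset.sum_add_distrib, ite_mul, zero_mul, neg_mul, Finset.sum_ite_eq',
      Finset.mem_univ, if_true]
    rw [hkk, hkj]
    linear_combination (M k k) * hd
  have h1 := (hM.dotProduct_mulVec_zero_iff _).mp hform
  have h2 := congrFun h1 i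
  rw [hv] at h2
  simp only [hik, zero_mul, sub_zero, Pi.zero_apply] at h2
  rcases mul_eq_zero.mp h2 with h | h
  · exact absurd h hij
  · exact msr_diag_ne hM hjk h

lemma msr_det4 (a b c d e f g h : ℂ) :
    Matrix.det !![a,b,0,0;c,d,0,0;(0:ℂ),0,e,f;0,0,g,h] = (a*d - b*c) * (e*h - f*g) := by
  simp [Matrix.det_succ_row_zero, Fin.sum_univ_succ, Fin.succAbove]
  ring

lemma msr_rank_sub_le (M : Matrix (Fin 7) (Fin 7) ℂ) (f : Fin 4 → Fin 7) :
    (M.submatrix f f).rank ≤ M.rank := by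
  classical
  let P : Matrix (Fin 4) (Fin 7) ℂ := (1 : Matrix (Fin 7) (Fin 7) ℂ).submatrix f id
  let Q : Matrix (Fin 7) (Fin 4) ℂ := (1 : Matrix (Fin 7) (Fin 7) ℂ).submatrix id f
  have hPQ : M.submatrix f f = P * M * Q := by
    ext i j
    simp [P, Q, Matrix.mul_apply, Matrix.one_apply, ite_mul, mul_ite,
      Finset.sum_ite_eq, Finset.sum_ite_eq']
  rw [hPQ, Matrix.mul_assoc]
  exact le_trans (Matrix.rank_mul_le_right P (M*Q)) (Matrix.rank_mul_le_left M Q)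

lemma msr_lower (M : Matrix (Fin 7) (Fin 7) ℂ) (hM : M.PosSemidef) (hG : HasGraphG1097 M) :
    4 ≤ M.rank := by
  have e01 : M 0 1 ≠ 0 := (hG 0 1 (by decide)).mpr (by simp [edgesG1097])
  have e12 : M 1 2 ≠ 0 := (hG 1 2 (by decide)).mpr (by simp [edgesG1097])
  have e65 : M 6 5 ≠ 0 := (hG 6 5 (by decide)).mpr
    (by simp only [edgesG1097, Set.mem_insert_iff, Set.mem_singleton_iff, Sym2.eq_iff]; decide)
  have e54 : M 5 4 ≠ 0 := (hG 5 4 (by decide)).mpr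
    (by simp only [edgesG1097, Set.mem_insert_iff, Set.mem_singleton_iff, Sym2.eq_iff]; decide)
  have z02 : M 0 2 = 0 := by
    by_contra h; exact (by simp [edgesG1097, Sym2.eq_iff] : s(1,3) ∉ edgesG1097)
      ((hG 0 2 (by decide)).mp h)
  have z64 : M 6 4 = 0 := by
    by_contra h; exact (by simp [edgesG1097, Sym2.eq_iff] : s(7,5) ∉ edgesG1097)
      ((hG 6 4 (by decide)).mp h)
  have z14 : M 1 4 = 0 := by
    by_contra h; exact (by simp [edgesG1097, Sym2.eq_iff] : s(2,5) ∉ edgesG1097)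
      ((hG 1 4 (by decide)).mp h)
  have z15 : M 1 5 = 0 := by
    by_contra h; exact (by simp [edgesG1097, Sym2.eq_iff] : s(2,6) ∉ edgesG1097)
      ((hG 1 5 (by decide)).mp h)
  have z24 : M 2 4 = 0 := by
    by_contra h; exact (by simp [edgesG1097, Sym2.eq_iff] : s(3,5) ∉ edgesG1097)
      ((hG 2 4 (by decide)).mp h)
  have z25 : M 2 5 = 0 := by
    by_contra h; exact (by simp [edgesG1097, Sym2.eq_iff] : s(3,6) ∉ edgesG1097)
      ((hG 2 5 (by decide)).mp h)
  have z41 : M 4 1 = 0 := by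
    by_contra h; exact (by simp [edgesG1097, Sym2.eq_iff] : s(5,2) ∉ edgesG1097)
      ((hG 4 1 (by decide)).mp h)
  have z51 : M 5 1 = 0 := by
    by_contra h; exact (by simp [edgesG1097, Sym2.eq_iff] : s(6,2) ∉ edgesG1097)
      ((hG 5 1 (by decide)).mp h)
  have z42 : M 4 2 = 0 := by
    by_contra h; exact (by simp [edgesG1097, Sym2.eq_iff] : s(5,3) ∉ edgesG1097)
      ((hG 4 2 (by decide)).mp h)
  have z52 : M 5 2 = 0 := by
    by_contra h; exact (by simp [edgesG1097, Sym2.eq_iff] : s(6,3) ∉ edgesG1097)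
      ((hG 5 2 (by decide)).mp h)
  have d1 : M 1 1 * M 2 2 - M 1 2 * M 2 1 ≠ 0 := msr_det2_ne hM e01 z02 e12
  have d2' : M 5 5 * M 4 4 - M 5 4 * M 4 5 ≠ 0 := msr_det2_ne hM e65 z64 e54
  have d2 : M 4 4 * M 5 5 - M 4 5 * M 5 4 ≠ 0 := by
    intro h; exact d2' (by linear_combination h)
  set f : Fin 4 → Fin 7 := ![1, 2, 4, 5] with hf
  have hN : M.submatrix f f =
      !![M 1 1, M 1 2, 0, 0; M 2 1, M 2 2, 0, 0;
         (0:ℂ), 0, M 4 4, M 4 5; 0, 0, M 5 4, M 5 5] := by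
    ext i j
    fin_cases i <;> fin_cases j <;>
      simp [hf, z14, z15, z24, z25, z41, z51, z42, z52, Matrix.vecHead, Matrix.vecTail]
  have hdet : (M.submatrix f f).det ≠ 0 := by
    rw [hN, msr_det4]
    exact mul_ne_zero d1 d2
  have hrank : (M.submatrix f f).rank = 4 := by
    have := Matrix.rank_of_isUnit (M.submatrix f f)
      ((Matrix.isUnit_iff_isUnit_det _).mpr (isUnit_iff_ne_zero.mpr hdet))
    simpa using this
  calc (4:ℕ) = (M.submatrix f f).rank := hrank.symm
    _ ≤ M.rank := msr_rank_sub_le M f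

def msrBZ : Matrix (Fin 4) (Fin 7) ℤ :=
  !![1, 1, 1, 0, 0, 0, 1;
     -1, 0, 1, 2, 0, 0, 1;
     1, 0, 0, 1, 1, 1, 0;
     1, 0, 0, 1, 0, 1, 1]

def msrNZ : Matrix (Fin 7) (Fin 7) ℤ :=
  !![4,1,0,0,1,2,1;
     1,1,1,0,0,0,1;
     0,1,2,2,0,0,2;
     0,0,2,6,1,2,3;
     1,0,0,1,1,1,0;
     2,0,0,2,1,2,1;
     1,1,2,3,0,1,3]

def msrB : Matrix (Fin 4) (Fin 7) ℂ := msrBZ.map (Int.cast : ℤ → ℂ)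

lemma msrM_eq : msrBᴴ * msrB = msrNZ.map (Int.cast : ℤ → ℂ) := by
  have hB : msrBᴴ = (msrBZᵀ).map (Int.cast : ℤ → ℂ) := by
    ext i j
    simp [msrB, Matrix.conjTranspose_apply, Matrix.map_apply, Matrix.transpose_apply]
  have h : msrBZᵀ * msrBZ = msrNZ := by decide
  ext i j
  rw [← h]
  simp [msrB, Matrix.mul_apply, Matrix.conjTranspose_apply, Matrix.map_apply,
    Matrix.transpose_apply, map_intCast]

set_option maxHeartbeats 1000000 in
lemma msr_graph_B : HasGraphG1097 (msrBᴴ * msrB) := by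
  intro i j hij
  rw [msrM_eq, Matrix.map_apply, Int.cast_ne_zero]
  fin_cases i <;> fin_cases j <;>
    first
    | exact absurd rfl hij
    | exact iff_of_true (by decide)
        (by simp only [edgesG1097, Set.mem_insert_iff, Set.mem_singleton_iff, Sym2.eq_iff]
            decide)
    | exact iff_of_false (by decide)
        (by simp only [edgesG1097, Set.mem_insert_iff, Set.mem_singleton_iff, Sym2.eq_iff]
            decide)

/-- msr(G1097) = 4. -/
theorem msr_G1097 :
    (∃ M : Matrix (Fin 7) (Fin 7) ℂ, M.PosSemidef ∧ HasGraphG1097 M ∧ M.rank = 4) ∧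
    (∀ M : Matrix (Fin 7) (Fin 7) ℂ, M.PosSemidef → HasGraphG1097 M → 4 ≤ M.rank) := by
  constructor
  · refine ⟨msrBᴴ * msrB, Matrix.posSemidef_conjTranspose_mul_self msrB, msr_graph_B, ?_⟩
    have hle : (msrBᴴ * msrB).rank ≤ 4 := by
      rw [Matrix.rank_conjTranspose_mul_self]
      simpa using msrB.rank_le_card_height
    have hge : 4 ≤ (msrBᴴ * msrB).rank :=
      msr_lower _ (Matrix.posSemidef_conjTranspose_mul_self msrB) msr_graph_B
    omega
  · exact msr_lower
end

section
/- Let G be the simple graph on vertex set {1,...,7} with edge set E = {{1,2},{1,5},{1,7},{2,3},{2,5},{2,6},{3,4},{3,5},{3,6},{4,6},{4,7},{5,7},{6,7}} (the graph G1101 of the atlas). Then msr(G) = 4; that is, there exists a 7×7 Hermitian positive semidefinite complex matrix with graph G of rank 4, and every 7×7 Hermitian positive semidefinite complex matrix with graph G has rank at least 4. -/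
open Matrix ComplexOrder

/-- The edge set of the graph G1101 on vertices 1,...,7. -/
def edgesG1101 : Set (Sym2 ℕ) :=
  {s(1, 2), s(1, 5), s(1, 7), s(2, 3), s(2, 5), s(2, 6), s(3, 4), s(3, 5), s(3, 6), s(4, 6), s(4, 7), s(5, 7), s(6, 7)}

/-- `M` has graph G1101: for `i ≠ j`, `M i j ≠ 0` iff `{i+1, j+1}` is an edge of G1101. -/
def HasGraphG1101 (M : Matrix (Fin 7) (Fin 7) ℂ) : Prop :=
  ∀ i j : Fin 7, i ≠ j → (M i j ≠ 0 ↔ s((i : ℕ) + 1, (j : ℕ) + 1) ∈ edgesG1101)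

@[simp] lemma cons_val_five' {α : Type*} {m : ℕ} (x : α) (u : Fin (m+5) → α) :
    vecCons x u 5 = vecHead (vecTail (vecTail (vecTail (vecTail u)))) := rfl
@[simp] lemma cons_val_six' {α : Type*} {m : ℕ} (x : α) (u : Fin (m+6) → α) :
    vecCons x u 6 = vecHead (vecTail (vecTail (vecTail (vecTail (vecTail u))))) := rfl

/-- The factor matrix whose columns are vectors realizing G1101 in ℂ⁴. -/
def AvG1101 : Matrix (Fin 4) (Fin 7) ℂ :=
  !![1,1,0,0,1,0,-1; 0,0,1,1,0,1,1; 0,1,1,0,0,1,1; 0,0,1,0,1,0,-2]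

/-- The Gram matrix of the columns of `AvG1101`. -/
def GramG1101 : Matrix (Fin 7) (Fin 7) ℂ :=
  !![1,1,0,0,1,0,-1;
     1,2,1,0,1,1,0;
     0,1,3,1,1,2,0;
     0,0,1,1,0,1,1;
     1,1,1,0,2,0,-3;
     0,1,2,1,0,2,2;
     -1,0,0,1,-3,2,7]

set_option maxHeartbeats 2000000 in
lemma gram_eq : AvG1101ᴴ * AvG1101 = GramG1101 := by
  ext i j
  fin_cases i <;> fin_cases j <;>
    simp [AvG1101, GramG1101, Matrix.mul_apply, Matrix.conjTranspose_apply,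
      Fin.sum_univ_succ, Matrix.vecHead, Matrix.vecTail, map_ofNat] <;> norm_num

/-- Column selector picking columns 0, 3, 1, 4. -/
def EselG1101 : Matrix (Fin 7) (Fin 4) ℂ :=
  !![1,0,0,0; 0,0,1,0; 0,0,0,0; 0,1,0,0; 0,0,0,1; 0,0,0,0; 0,0,0,0]

lemma AvE_eq : AvG1101 * EselG1101 = !![1,0,1,1; 0,1,0,0; 0,0,1,0; 0,0,0,1] := by
  ext i j
  fin_cases i <;> fin_cases j <;>
    simp [AvG1101, EselG1101, Matrix.mul_apply, Fin.sum_univ_succ,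
      Matrix.vecHead, Matrix.vecTail]

lemma rank_Av : AvG1101.rank = 4 := by
  refine le_antisymm (AvG1101.rank_le_card_height.trans (by simp)) ?_
  have h1 : (AvG1101 * EselG1101).rank ≤ AvG1101.rank := rank_mul_le_left _ _
  have h2 : (AvG1101 * EselG1101).rank = 4 := by
    rw [AvE_eq]
    rw [Matrix.rank_of_isUnit, Fintype.card_fin]
    rw [Matrix.isUnit_iff_isUnit_det]
    have : (!![1,0,1,1; 0,1,0,0; 0,0,1,0; 0,0,0,1] : Matrix (Fin 4) (Fin 4) ℂ).det = 1 := by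
      simp [Matrix.det_succ_row_zero, Fin.sum_univ_succ]
    rw [this]; exact isUnit_one
  omega

set_option maxHeartbeats 2000000 in
lemma gram_hasGraph : HasGraphG1101 GramG1101 := by
  intro i j hij
  fin_cases i <;> fin_cases j <;>
    simp_all [GramG1101, edgesG1101, Matrix.vecHead, Matrix.vecTail,
      show ((0:Fin 7):ℕ) = 0 from rfl, show ((1:Fin 7):ℕ) = 1 from rfl,
      show ((2:Fin 7):ℕ) = 2 from rfl, show ((3:Fin 7):ℕ) = 3 from rfl,
      show ((4:Fin 7):ℕ) = 4 from rfl, show ((5:Fin 7):ℕ) = 5 from rfl,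
      show ((6:Fin 7):ℕ) = 6 from rfl]

/-- The row selector for the lower bound: rows 1, 2, 5, 3 (0-indexed). -/
def PrG1101 : Matrix (Fin 4) (Fin 7) ℂ :=
  !![0,1,0,0,0,0,0; 0,0,1,0,0,0,0; 0,0,0,0,0,1,0; 0,0,0,1,0,0,0]

/-- The column selector for the lower bound: columns 0, 4, 1, 2 (0-indexed). -/
def PcG1101 : Matrix (Fin 7) (Fin 4) ℂ :=
  !![1,0,0,0; 0,0,1,0; 0,0,0,1; 0,0,0,0; 0,1,0,0; 0,0,0,0; 0,0,0,0]

set_option maxHeartbeats 2000000 in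
lemma lower_bound_G1101 (M : Matrix (Fin 7) (Fin 7) ℂ)
    (hG : HasGraphG1101 M) : 4 ≤ M.rank := by
  have hz20 : M 2 0 = 0 := by
    by_contra h
    exact absurd ((hG 2 0 (by decide)).mp h)
      (by show ¬ s(3,1) ∈ edgesG1101; simp [edgesG1101])
  have hz50 : M 5 0 = 0 := by
    by_contra h
    exact absurd ((hG 5 0 (by decide)).mp h)
      (by show ¬ s(6,1) ∈ edgesG1101; simp [edgesG1101])
  have hz54 : M 5 4 = 0 := by
    by_contra h
    exact absurd ((hG 5 4 (by decide)).mp h)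
      (by show ¬ s(6,5) ∈ edgesG1101; simp [edgesG1101])
  have hz30 : M 3 0 = 0 := by
    by_contra h
    exact absurd ((hG 3 0 (by decide)).mp h)
      (by show ¬ s(4,1) ∈ edgesG1101; simp [edgesG1101])
  have hz34 : M 3 4 = 0 := by
    by_contra h
    exact absurd ((hG 3 4 (by decide)).mp h)
      (by show ¬ s(4,5) ∈ edgesG1101; simp [edgesG1101])
  have hz31 : M 3 1 = 0 := by
    by_contra h
    exact absurd ((hG 3 1 (by decide)).mp h)
      (by show ¬ s(4,2) ∈ edgesG1101; simp [edgesG1101])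
  have hn10 : M 1 0 ≠ 0 :=
    (hG 1 0 (by decide)).mpr (by show s(2,1) ∈ edgesG1101; simp [edgesG1101])
  have hn24 : M 2 4 ≠ 0 :=
    (hG 2 4 (by decide)).mpr (by show s(3,5) ∈ edgesG1101; simp [edgesG1101])
  have hn51 : M 5 1 ≠ 0 :=
    (hG 5 1 (by decide)).mpr (by show s(6,2) ∈ edgesG1101; simp [edgesG1101])
  have hn32 : M 3 2 ≠ 0 :=
    (hG 3 2 (by decide)).mpr (by show s(4,3) ∈ edgesG1101; simp [edgesG1101])
  set B : Matrix (Fin 4) (Fin 4) ℂ := PrG1101 * M * PcG1101 with hB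
  have hBent : ∀ k l : Fin 4, B k l = M (![1,2,5,3] k) (![0,4,1,2] l) := by
    intro k l
    fin_cases k <;> fin_cases l <;>
      simp [hB, PrG1101, PcG1101, Matrix.mul_apply, Fin.sum_univ_succ, Matrix.vecMul,
        dotProduct, Matrix.vecHead, Matrix.vecTail] <;> rfl
  have hTri : B.BlockTriangular id := by
    intro i j hij
    revert hij
    fin_cases i <;> fin_cases j <;> intro hij <;>
      first
        | exact absurd hij (by decide)
        | simp [hBent, hz20, hz50, hz54, hz30, hz34, hz31]
  have e0 : B 0 0 = M 1 0 := by simp [hBent]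
  have e1 : B 1 1 = M 2 4 := by simp [hBent]
  have e2 : B 2 2 = M 5 1 := by simp [hBent]
  have e3 : B 3 3 = M 3 2 := by simp [hBent]
  have hdet : B.det ≠ 0 := by
    rw [Matrix.det_of_upperTriangular hTri, Fin.prod_univ_four, e0, e1, e2, e3]
    exact mul_ne_zero (mul_ne_zero (mul_ne_zero hn10 hn24) hn51) hn32
  have hrB : B.rank = 4 := by
    rw [Matrix.rank_of_isUnit, Fintype.card_fin]
    rw [Matrix.isUnit_iff_isUnit_det]
    exact isUnit_iff_ne_zero.mpr hdet
  have h1 : B.rank ≤ (PrG1101 * M).rank := rank_mul_le_left _ _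
  have h2 : (PrG1101 * M).rank ≤ M.rank := rank_mul_le_right _ _
  omega

/-- msr(G1101) = 4. -/
theorem msr_G1101 :
    (∃ M : Matrix (Fin 7) (Fin 7) ℂ, M.PosSemidef ∧ HasGraphG1101 M ∧ M.rank = 4) ∧
    (∀ M : Matrix (Fin 7) (Fin 7) ℂ, M.PosSemidef → HasGraphG1101 M → 4 ≤ M.rank) := by
  constructor
  · refine ⟨GramG1101, ?_, gram_hasGraph, ?_⟩
    · rw [← gram_eq]; exact Matrix.posSemidef_conjTranspose_mul_self _
    · rw [← gram_eq, Matrix.rank_conjTranspose_mul_self, rank_Av]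
  · intro M _ hG
    exact lower_bound_G1101 M hG
end

section
/- Let G be the simple graph on vertex set {1,...,7} with edge set E = {{1,2},{1,5},{1,6},{2,3},{2,5},{2,6},{2,7},{3,4},{3,5},{3,7},{4,5},{4,7},{5,6},{6,7}} (the graph G1154 of the atlas). Then msr(G) = 4; that is, there exists a 7×7 Hermitian positive semidefinite complex matrix with graph G of rank 4, and every 7×7 Hermitian positive semidefinite complex matrix with graph G has rank at least 4. -/
open Matrix ComplexOrder

/-- The edge set of the graph G1154 on vertices 1,...,7. -/
def edgesG1154 : Set (Sym2 ℕ) :=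
  {s(1, 2), s(1, 5), s(1, 6), s(2, 3), s(2, 5), s(2, 6), s(2, 7), s(3, 4), s(3, 5), s(3, 7), s(4, 5), s(4, 7), s(5, 6), s(6, 7)}

/-- `M` has graph G1154: for `i ≠ j`, `M i j ≠ 0` iff `{i+1, j+1}` is an edge of G1154. -/
def HasGraphG1154 (M : Matrix (Fin 7) (Fin 7) ℂ) : Prop :=
  ∀ i j : Fin 7, i ≠ j → (M i j ≠ 0 ↔ s((i : ℕ) + 1, (j : ℕ) + 1) ∈ edgesG1154)

section Aux

lemma f7_6 : (6:Fin 7) = Fin.succ 5 := rfl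
lemma f7_5 : (5:Fin 7) = Fin.succ 4 := rfl
lemma f7_4 : (4:Fin 7) = Fin.succ 3 := rfl
lemma f7_3 : (3:Fin 7) = Fin.succ 2 := rfl
lemma f7_2 : (2:Fin 7) = Fin.succ 1 := rfl
lemma f7_1 : (1:Fin 7) = Fin.succ 0 := rfl
lemma f6_5 : (5:Fin 6) = Fin.succ 4 := rfl
lemma f6_4 : (4:Fin 6) = Fin.succ 3 := rfl
lemma f6_3 : (3:Fin 6) = Fin.succ 2 := rfl
lemma f6_2 : (2:Fin 6) = Fin.succ 1 := rfl
lemma f6_1 : (1:Fin 6) = Fin.succ 0 := rfl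
lemma f5_4 : (4:Fin 5) = Fin.succ 3 := rfl
lemma f5_3 : (3:Fin 5) = Fin.succ 2 := rfl
lemma f5_2 : (2:Fin 5) = Fin.succ 1 := rfl
lemma f5_1 : (1:Fin 5) = Fin.succ 0 := rfl
lemma f4_3 : (3:Fin 4) = Fin.succ 2 := rfl
lemma f4_2 : (2:Fin 4) = Fin.succ 1 := rfl
lemma f4_1 : (1:Fin 4) = Fin.succ 0 := rfl
lemma f3_2 : (2:Fin 3) = Fin.succ 1 := rfl
lemma f3_1 : (1:Fin 3) = Fin.succ 0 := rfl
lemma f2_1 : (1:Fin 2) = Fin.succ 0 := rfl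

def Vmat : Matrix (Fin 7) (Fin 4) ℂ :=
  !![1,0,0,0; 1,1,-1,1; 0,1,0,0; 0,1,1,0; 1,2,1,-3; 1,0,0,1; 0,1,1,1]

def Mex : Matrix (Fin 7) (Fin 7) ℂ :=
  !![1,1,0,0,1,1,0;
     1,4,1,0,-1,2,1;
     0,1,1,1,2,0,1;
     0,0,1,2,3,0,2;
     1,-1,2,3,15,-2,0;
     1,2,0,0,-2,2,1;
     0,1,1,2,0,1,3]

lemma hMexVmat : Mex = Vmat * Vmatᴴ := by
  ext i j
  fin_cases i <;> fin_cases j <;>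
    (rw [Matrix.mul_apply, Fin.sum_univ_four]
     simp only [Vmat, Mex, conjTranspose_apply, f7_6, f7_5, f7_4, f7_3, f7_2, f7_1,
       f6_5, f6_4, f6_3, f6_2, f6_1, f5_4, f5_3, f5_2, f5_1, f4_3, f4_2, f4_1, f3_2, f3_1, f2_1,
       Matrix.cons_val_succ, Matrix.cons_val_zero, Matrix.cons_val', Matrix.of_apply,
       Matrix.cons_val_fin_one, Matrix.empty_val']
     norm_num)

lemma Mex_posSemidef : Mex.PosSemidef := by
  rw [hMexVmat]; exact posSemidef_self_mul_conjTranspose Vmat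

def Pmat : Matrix (Fin 4) (Fin 7) ℂ :=
  !![1,0,0,0,0,0,0; 0,0,1,0,0,0,0; 0,0,0,1,0,0,0; 0,0,0,0,0,1,0]

def Smat : Matrix (Fin 4) (Fin 4) ℂ := !![1,0,0,0; 0,1,0,0; 0,1,1,0; 1,0,0,1]

def Tmat : Matrix (Fin 4) (Fin 4) ℂ := !![1,0,0,0; 0,1,0,0; 0,-1,1,0; -1,0,0,1]

lemma hPV : Pmat * Vmat = Smat := by
  ext i j
  fin_cases i <;> fin_cases j <;>
    (rw [Matrix.mul_apply, Fin.sum_univ_seven]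
     simp only [Vmat, Pmat, Smat, f7_6, f7_5, f7_4, f7_3, f7_2, f7_1,
       f6_5, f6_4, f6_3, f6_2, f6_1, f5_4, f5_3, f5_2, f5_1, f4_3, f4_2, f4_1, f3_2, f3_1, f2_1,
       Matrix.cons_val_succ, Matrix.cons_val_zero, Matrix.cons_val', Matrix.of_apply,
       Matrix.cons_val_fin_one, Matrix.empty_val']
     norm_num)

lemma hST : Smat * Tmat = 1 := by
  ext i j
  fin_cases i <;> fin_cases j <;>
    (rw [Matrix.mul_apply, Fin.sum_univ_four]
     simp only [Smat, Tmat, f7_6, f7_5, f7_4, f7_3, f7_2, f7_1,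
       f6_5, f6_4, f6_3, f6_2, f6_1, f5_4, f5_3, f5_2, f5_1, f4_3, f4_2, f4_1, f3_2, f3_1, f2_1,
       Matrix.cons_val_succ, Matrix.cons_val_zero, Matrix.cons_val', Matrix.of_apply,
       Matrix.cons_val_fin_one, Matrix.empty_val', Matrix.one_apply]
     norm_num [Fin.ext_iff])

lemma Smat_isUnit : IsUnit Smat := by
  have : Invertible Smat := invertibleOfRightInverse Smat _ hST
  exact isUnit_of_invertible Smat

lemma Mex_rank : Mex.rank = 4 := by
  have h1 : Mex.rank = Vmat.rank := by rw [hMexVmat, rank_self_mul_conjTranspose]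
  have hle : Vmat.rank ≤ 4 := by simpa using Vmat.rank_le_card_width
  have hS : Smat.rank = 4 := by simpa using Smat.rank_of_isUnit Smat_isUnit
  have hge : 4 ≤ Vmat.rank := by
    calc 4 = (Pmat * Vmat).rank := by rw [hPV, hS]
    _ ≤ Vmat.rank := rank_mul_le_right _ _
  omega

/-- If `k` columns of a matrix are linearly independent, then `k ≤ rank`. -/
lemma card_le_rank_of_linearIndependent_cols {k : ℕ} (B : Matrix (Fin 7) (Fin 7) ℂ)
    (f : Fin k → Fin 7) (h : LinearIndependent ℂ (fun i => Bᵀ (f i))) : k ≤ B.rank := by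
  have hmem : ∀ i, Bᵀ (f i) ∈ LinearMap.range B.mulVecLin := fun i =>
    ⟨Pi.single (f i) 1, by rw [mulVecLin_apply, mulVec_single_one]; rfl⟩
  let w : Fin k → LinearMap.range B.mulVecLin := fun i => ⟨Bᵀ (f i), hmem i⟩
  have hw : LinearIndependent ℂ w := by
    apply LinearIndependent.of_comp (LinearMap.range B.mulVecLin).subtype
    exact h
  simpa [Matrix.rank] using hw.fintype_card_le_finrank

lemma mem_12 : s(1,2) ∈ edgesG1154 := by simp [edgesG1154]
lemma nmem_13 : s(1,3) ∉ edgesG1154 := by simp [edgesG1154, Sym2.eq_iff]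
lemma nmem_14 : s(1,4) ∉ edgesG1154 := by simp [edgesG1154, Sym2.eq_iff]
lemma mem_15 : s(1,5) ∈ edgesG1154 := by simp [edgesG1154]
lemma mem_16 : s(1,6) ∈ edgesG1154 := by simp [edgesG1154]
lemma nmem_17 : s(1,7) ∉ edgesG1154 := by simp [edgesG1154, Sym2.eq_iff]
lemma mem_21 : s(2,1) ∈ edgesG1154 := by simp [edgesG1154, Sym2.eq_iff]
lemma mem_23 : s(2,3) ∈ edgesG1154 := by simp [edgesG1154]
lemma nmem_24 : s(2,4) ∉ edgesG1154 := by simp [edgesG1154, Sym2.eq_iff]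
lemma mem_25 : s(2,5) ∈ edgesG1154 := by simp [edgesG1154]
lemma mem_26 : s(2,6) ∈ edgesG1154 := by simp [edgesG1154]
lemma mem_27 : s(2,7) ∈ edgesG1154 := by simp [edgesG1154]
lemma nmem_31 : s(3,1) ∉ edgesG1154 := by simp [edgesG1154, Sym2.eq_iff]
lemma mem_32 : s(3,2) ∈ edgesG1154 := by simp [edgesG1154, Sym2.eq_iff]
lemma mem_34 : s(3,4) ∈ edgesG1154 := by simp [edgesG1154]
lemma mem_35 : s(3,5) ∈ edgesG1154 := by simp [edgesG1154]
lemma nmem_36 : s(3,6) ∉ edgesG1154 := by simp [edgesG1154, Sym2.eq_iff]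
lemma mem_37 : s(3,7) ∈ edgesG1154 := by simp [edgesG1154]
lemma nmem_41 : s(4,1) ∉ edgesG1154 := by simp [edgesG1154, Sym2.eq_iff]
lemma nmem_42 : s(4,2) ∉ edgesG1154 := by simp [edgesG1154, Sym2.eq_iff]
lemma mem_43 : s(4,3) ∈ edgesG1154 := by simp [edgesG1154, Sym2.eq_iff]
lemma mem_45 : s(4,5) ∈ edgesG1154 := by simp [edgesG1154]
lemma nmem_46 : s(4,6) ∉ edgesG1154 := by simp [edgesG1154, Sym2.eq_iff]
lemma mem_47 : s(4,7) ∈ edgesG1154 := by simp [edgesG1154]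
lemma mem_51 : s(5,1) ∈ edgesG1154 := by simp [edgesG1154, Sym2.eq_iff]
lemma mem_52 : s(5,2) ∈ edgesG1154 := by simp [edgesG1154, Sym2.eq_iff]
lemma mem_53 : s(5,3) ∈ edgesG1154 := by simp [edgesG1154, Sym2.eq_iff]
lemma mem_54 : s(5,4) ∈ edgesG1154 := by simp [edgesG1154, Sym2.eq_iff]
lemma mem_56 : s(5,6) ∈ edgesG1154 := by simp [edgesG1154]
lemma nmem_57 : s(5,7) ∉ edgesG1154 := by simp [edgesG1154, Sym2.eq_iff]
lemma mem_61 : s(6,1) ∈ edgesG1154 := by simp [edgesG1154, Sym2.eq_iff]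
lemma mem_62 : s(6,2) ∈ edgesG1154 := by simp [edgesG1154, Sym2.eq_iff]
lemma nmem_63 : s(6,3) ∉ edgesG1154 := by simp [edgesG1154, Sym2.eq_iff]
lemma nmem_64 : s(6,4) ∉ edgesG1154 := by simp [edgesG1154, Sym2.eq_iff]
lemma mem_65 : s(6,5) ∈ edgesG1154 := by simp [edgesG1154, Sym2.eq_iff]
lemma mem_67 : s(6,7) ∈ edgesG1154 := by simp [edgesG1154]
lemma nmem_71 : s(7,1) ∉ edgesG1154 := by simp [edgesG1154, Sym2.eq_iff]
lemma mem_72 : s(7,2) ∈ edgesG1154 := by simp [edgesG1154, Sym2.eq_iff]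
lemma mem_73 : s(7,3) ∈ edgesG1154 := by simp [edgesG1154, Sym2.eq_iff]
lemma mem_74 : s(7,4) ∈ edgesG1154 := by simp [edgesG1154, Sym2.eq_iff]
lemma nmem_75 : s(7,5) ∉ edgesG1154 := by simp [edgesG1154, Sym2.eq_iff]
lemma mem_76 : s(7,6) ∈ edgesG1154 := by simp [edgesG1154, Sym2.eq_iff]

lemma Mex_graph : HasGraphG1154 Mex := by
  intro i j hij
  fin_cases i <;> fin_cases j
  · exact absurd rfl hij
  · exact iff_of_true (by norm_num : (1:ℂ) ≠ 0) mem_12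
  · exact iff_of_false (fun h => h rfl) nmem_13
  · exact iff_of_false (fun h => h rfl) nmem_14
  · exact iff_of_true (by norm_num : (1:ℂ) ≠ 0) mem_15
  · exact iff_of_true (by norm_num : (1:ℂ) ≠ 0) mem_16
  · exact iff_of_false (fun h => h rfl) nmem_17
  · exact iff_of_true (by norm_num : (1:ℂ) ≠ 0) mem_21
  · exact absurd rfl hij
  · exact iff_of_true (by norm_num : (1:ℂ) ≠ 0) mem_23
  · exact iff_of_false (fun h => h rfl) nmem_24
  · exact iff_of_true (by norm_num : ((-1):ℂ) ≠ 0) mem_25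
  · exact iff_of_true (by norm_num : (2:ℂ) ≠ 0) mem_26
  · exact iff_of_true (by norm_num : (1:ℂ) ≠ 0) mem_27
  · exact iff_of_false (fun h => h rfl) nmem_31
  · exact iff_of_true (by norm_num : (1:ℂ) ≠ 0) mem_32
  · exact absurd rfl hij
  · exact iff_of_true (by norm_num : (1:ℂ) ≠ 0) mem_34
  · exact iff_of_true (by norm_num : (2:ℂ) ≠ 0) mem_35
  · exact iff_of_false (fun h => h rfl) nmem_36
  · exact iff_of_true (by norm_num : (1:ℂ) ≠ 0) mem_37
  · exact iff_of_false (fun h => h rfl) nmem_41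
  · exact iff_of_false (fun h => h rfl) nmem_42
  · exact iff_of_true (by norm_num : (1:ℂ) ≠ 0) mem_43
  · exact absurd rfl hij
  · exact iff_of_true (by norm_num : (3:ℂ) ≠ 0) mem_45
  · exact iff_of_false (fun h => h rfl) nmem_46
  · exact iff_of_true (by norm_num : (2:ℂ) ≠ 0) mem_47
  · exact iff_of_true (by norm_num : (1:ℂ) ≠ 0) mem_51
  · exact iff_of_true (by norm_num : ((-1):ℂ) ≠ 0) mem_52
  · exact iff_of_true (by norm_num : (2:ℂ) ≠ 0) mem_53
  · exact iff_of_true (by norm_num : (3:ℂ) ≠ 0) mem_54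
  · exact absurd rfl hij
  · exact iff_of_true (by norm_num : ((-2):ℂ) ≠ 0) mem_56
  · exact iff_of_false (fun h => h rfl) nmem_57
  · exact iff_of_true (by norm_num : (1:ℂ) ≠ 0) mem_61
  · exact iff_of_true (by norm_num : (2:ℂ) ≠ 0) mem_62
  · exact iff_of_false (fun h => h rfl) nmem_63
  · exact iff_of_false (fun h => h rfl) nmem_64
  · exact iff_of_true (by norm_num : ((-2):ℂ) ≠ 0) mem_65
  · exact absurd rfl hij
  · exact iff_of_true (by norm_num : (1:ℂ) ≠ 0) mem_67
  · exact iff_of_false (fun h => h rfl) nmem_71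
  · exact iff_of_true (by norm_num : (1:ℂ) ≠ 0) mem_72
  · exact iff_of_true (by norm_num : (1:ℂ) ≠ 0) mem_73
  · exact iff_of_true (by norm_num : (2:ℂ) ≠ 0) mem_74
  · exact iff_of_false (fun h => h rfl) nmem_75
  · exact iff_of_true (by norm_num : (1:ℂ) ≠ 0) mem_76
  · exact absurd rfl hij

end Aux

/-- msr(G1154) = 4. -/
theorem msr_G1154 :
    (∃ M : Matrix (Fin 7) (Fin 7) ℂ, M.PosSemidef ∧ HasGraphG1154 M ∧ M.rank = 4) ∧
    (∀ M : Matrix (Fin 7) (Fin 7) ℂ, M.PosSemidef → HasGraphG1154 M → 4 ≤ M.rank) := by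
  constructor
  · exact ⟨Mex, Mex_posSemidef, Mex_graph, Mex_rank⟩
  · intro M hPSD hG
    obtain ⟨B, hB⟩ : ∃ B : Matrix (Fin 7) (Fin 7) ℂ, M = Bᴴ * B := by
      open scoped MatrixOrder in
      obtain ⟨B, hB⟩ := CStarAlgebra.nonneg_iff_eq_star_mul_self.mp hPSD.nonneg
      exact ⟨B, hB⟩
    have hM : ∀ i j, M i j = star (Bᵀ i) ⬝ᵥ Bᵀ j := by
      intro i j
      rw [hB, Matrix.mul_apply]
      simp only [dotProduct, conjTranspose_apply, Pi.star_apply, transpose_apply]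
    set c : Fin 7 → Fin 7 → ℂ := fun j => Bᵀ j with hc
    -- zero entries (non-edges)
    have n13 : star (c 1) ⬝ᵥ c 3 = 0 := by
      rw [← hM]; by_contra hne; exact nmem_24 ((hG 1 3 (by decide)).mp hne)
    have n20 : star (c 2) ⬝ᵥ c 0 = 0 := by
      rw [← hM]; by_contra hne; exact nmem_31 ((hG 2 0 (by decide)).mp hne)
    have n30 : star (c 3) ⬝ᵥ c 0 = 0 := by
      rw [← hM]; by_contra hne; exact nmem_41 ((hG 3 0 (by decide)).mp hne)
    have n02 : star (c 0) ⬝ᵥ c 2 = 0 := by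
      rw [← hM]; by_contra hne; exact nmem_13 ((hG 0 2 (by decide)).mp hne)
    have n03 : star (c 0) ⬝ᵥ c 3 = 0 := by
      rw [← hM]; by_contra hne; exact nmem_14 ((hG 0 3 (by decide)).mp hne)
    have n25 : star (c 2) ⬝ᵥ c 5 = 0 := by
      rw [← hM]; by_contra hne; exact nmem_36 ((hG 2 5 (by decide)).mp hne)
    have n35 : star (c 3) ⬝ᵥ c 5 = 0 := by
      rw [← hM]; by_contra hne; exact nmem_46 ((hG 3 5 (by decide)).mp hne)
    have n60 : star (c 6) ⬝ᵥ c 0 = 0 := by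
      rw [← hM]; by_contra hne; exact nmem_71 ((hG 6 0 (by decide)).mp hne)
    -- nonzero entries (edges)
    have e01 : star (c 0) ⬝ᵥ c 1 ≠ 0 := by
      rw [← hM]; exact (hG 0 1 (by decide)).mpr mem_12
    have e12 : star (c 1) ⬝ᵥ c 2 ≠ 0 := by
      rw [← hM]; exact (hG 1 2 (by decide)).mpr mem_23
    have e23 : star (c 2) ⬝ᵥ c 3 ≠ 0 := by
      rw [← hM]; exact (hG 2 3 (by decide)).mpr mem_34
    have e65 : star (c 6) ⬝ᵥ c 5 ≠ 0 := by
      rw [← hM]; exact (hG 6 5 (by decide)).mpr mem_76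
    by_contra hlt
    push_neg at hlt
    have hrB : B.rank ≤ 3 := by
      have h := rank_conjTranspose_mul_self B
      rw [← hB] at h
      omega
    by_cases hind : LinearIndependent ℂ ![c 2, c 3]
    · -- c 2, c 3 linearly independent
      have hdep4 : ¬ LinearIndependent ℂ (fun i : Fin 4 => c ((![0,2,3,5] : Fin 4 → Fin 7) i)) := by
        intro h
        have := card_le_rank_of_linearIndependent_cols B ![0,2,3,5] h
        omega
      obtain ⟨g, hsum, i0, hg⟩ := Fintype.not_linearIndependent_iff.mp hdep4
      rw [Fin.sum_univ_four] at hsum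
      have hsum' : g 0 • c 0 + g 1 • c 2 + g 2 • c 3 + g 3 • c 5 = 0 := hsum
      have h2 := congrArg (fun v => star (c 2) ⬝ᵥ v) hsum'
      simp only [dotProduct_add, dotProduct_smul, smul_eq_mul, dotProduct_zero, n20, n25,
        mul_zero, add_zero, zero_add] at h2
      have h3 := congrArg (fun v => star (c 3) ⬝ᵥ v) hsum'
      simp only [dotProduct_add, dotProduct_smul, smul_eq_mul, dotProduct_zero, n30, n35,
        mul_zero, add_zero, zero_add] at h3
      have hv : star (g 1 • c 2 + g 2 • c 3) ⬝ᵥ (g 1 • c 2 + g 2 • c 3) = 0 := by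
        simp only [star_add, star_smul, add_dotProduct, smul_dotProduct, dotProduct_add,
          dotProduct_smul, smul_eq_mul]
        linear_combination (star (g 1)) * h2 + (star (g 2)) * h3
      have hv0 : g 1 • c 2 + g 2 • c 3 = 0 := dotProduct_star_self_eq_zero.mp hv
      obtain ⟨hg1, hg2⟩ := hind.eq_zero_of_pair hv0
      rw [hg1, hg2] at hsum'
      simp only [zero_smul, add_zero, zero_add] at hsum'
      -- hsum' : g 0 • c 0 + g 3 • c 5 = 0
      have h6 := congrArg (fun v => star (c 6) ⬝ᵥ v) hsum'
      simp only [dotProduct_add, dotProduct_smul, smul_eq_mul, dotProduct_zero, n60,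
        mul_zero, add_zero, zero_add] at h6
      have hg3 : g 3 = 0 := by
        rcases mul_eq_zero.mp h6 with h | h
        · exact h
        · exact absurd h e65
      rw [hg3] at hsum'
      simp only [zero_smul, add_zero] at hsum'
      have hg0 : g 0 ≠ 0 := by
        fin_cases i0 <;> simp_all
      have hc0 : c 0 = 0 := by
        rcases smul_eq_zero.mp hsum' with h | h
        · exact absurd h hg0
        · exact h
      apply e01
      rw [hc0]
      simp
    · -- c 2, c 3 linearly dependent
      obtain ⟨g, hsum, i0, hg⟩ := Fintype.not_linearIndependent_iff.mp hind
      rw [Fin.sum_univ_two] at hsum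
      have hsum' : g 0 • c 2 + g 1 • c 3 = 0 := hsum
      have h1 := congrArg (fun v => star (c 1) ⬝ᵥ v) hsum'
      simp only [dotProduct_add, dotProduct_smul, smul_eq_mul, dotProduct_zero, n13,
        mul_zero, add_zero, zero_add] at h1
      have hg0 : g 0 = 0 := by
        rcases mul_eq_zero.mp h1 with h | h
        · exact h
        · exact absurd h e12
      rw [hg0] at hsum'
      simp only [zero_smul, zero_add] at hsum'
      have hg1 : g 1 ≠ 0 := by
        fin_cases i0 <;> simp_all
      have hc3 : c 3 = 0 := by
        rcases smul_eq_zero.mp hsum' with h | h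
        · exact absurd h hg1
        · exact h
      apply e23
      rw [hc3]
      simp
end

section
/- Let G be the simple graph on vertex set {1,...,7} with edge set E = {{1,2},{1,4},{1,5},{1,6},{1,7},{2,3},{2,5},{2,6},{3,4},{3,5},{3,6},{3,7},{4,5},{4,7},{5,6},{6,7}} (the graph G1231 of the atlas). Then msr(G) = 3; that is, there exists a 7×7 Hermitian positive semidefinite complex matrix with graph G of rank 3, and every 7×7 Hermitian positive semidefinite complex matrix with graph G has rank at least 3. -/
open Matrix ComplexOrder

/-- The edge set of the graph G1231 on vertices 1,...,7. -/
def edgesG1231 : Set (Sym2 ℕ) :=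
  {s(1, 2), s(1, 4), s(1, 5), s(1, 6), s(1, 7), s(2, 3), s(2, 5), s(2, 6), s(3, 4), s(3, 5), s(3, 6), s(3, 7), s(4, 5), s(4, 7), s(5, 6), s(6, 7)}

/-- `M` has graph G1231: for `i ≠ j`, `M i j ≠ 0` iff `{i+1, j+1}` is an edge of G1231. -/
def HasGraphG1231 (M : Matrix (Fin 7) (Fin 7) ℂ) : Prop :=
  ∀ i j : Fin 7, i ≠ j → (M i j ≠ 0 ↔ s((i : ℕ) + 1, (j : ℕ) + 1) ∈ edgesG1231)

/-- Integer matrix whose columns are vectors realizing G1231 as an orthogonality pattern. -/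
def AintG1231 : Matrix (Fin 3) (Fin 7) ℤ :=
  !![1,1,0,1,2,2,1; 0,1,1,0,2,1,-1; 0,1,1,-1,1,2,0]

noncomputable def AmatG1231 : Matrix (Fin 3) (Fin 7) ℂ := fun k i => ((AintG1231 k i : ℤ) : ℂ)

noncomputable def MmatG1231 : Matrix (Fin 7) (Fin 7) ℂ := AmatG1231ᴴ * AmatG1231

lemma MmatG1231_apply (i j : Fin 7) :
    MmatG1231 i j = (((AintG1231ᵀ * AintG1231) i j : ℤ) : ℂ) := by
  simp [MmatG1231, AmatG1231, Matrix.mul_apply, Matrix.transpose_apply,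
    Matrix.conjTranspose_apply]

lemma MmatG1231_graph : HasGraphG1231 MmatG1231 := by
  intro i j hij
  rw [MmatG1231_apply]
  simp only [ne_eq, Int.cast_eq_zero, edgesG1231, Set.mem_insert_iff, Set.mem_singleton_iff]
  fin_cases i <;> fin_cases j <;> first | (exact absurd rfl hij) | decide

/-- The lower bound: any matrix with graph G1231 has rank at least 3, because the
submatrix with rows 2,5,6 and columns 5,4,7 (1-indexed) is triangular with nonzero
diagonal. -/
lemma msr_G1231_lower (M : Matrix (Fin 7) (Fin 7) ℂ) (hG : HasGraphG1231 M) : 3 ≤ M.rank := by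
  have e14 : M 1 4 ≠ 0 := (hG 1 4 (by decide)).mpr (show s(2,5) ∈ edgesG1231 by simp [edgesG1231])
  have e43 : M 4 3 ≠ 0 := (hG 4 3 (by decide)).mpr (show s(5,4) ∈ edgesG1231 by simp [edgesG1231])
  have e56 : M 5 6 ≠ 0 := (hG 5 6 (by decide)).mpr (show s(6,7) ∈ edgesG1231 by simp [edgesG1231])
  have z13 : M 1 3 = 0 := by
    by_contra h
    exact (show s(2,4) ∉ edgesG1231 by simp [edgesG1231]) ((hG 1 3 (by decide)).mp h)
  have z16 : M 1 6 = 0 := by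
    by_contra h
    exact (show s(2,7) ∉ edgesG1231 by simp [edgesG1231]) ((hG 1 6 (by decide)).mp h)
  have z46 : M 4 6 = 0 := by
    by_contra h
    exact (show s(5,7) ∉ edgesG1231 by simp [edgesG1231]) ((hG 4 6 (by decide)).mp h)
  set u : Fin 3 → (Fin 7 → ℂ) := ![fun i => M i 4, fun i => M i 3, fun i => M i 6] with hu
  have hmem : ∀ k, u k ∈ LinearMap.range M.mulVecLin := by
    intro k
    fin_cases k
    · exact ⟨Pi.single 4 1, by funext i; simp [Matrix.mulVecLin, Matrix.mulVec_single, hu]⟩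
    · exact ⟨Pi.single 3 1, by funext i; simp [Matrix.mulVecLin, Matrix.mulVec_single, hu]⟩
    · exact ⟨Pi.single 6 1, by funext i; simp [Matrix.mulVecLin, Matrix.mulVec_single, hu]⟩
  have hli : LinearIndependent ℂ u := by
    rw [Fintype.linearIndependent_iff]
    intro g hg
    have h1 := congrFun hg 1
    have h4 := congrFun hg 4
    have h5 := congrFun hg 5
    simp [hu, Fin.sum_univ_three] at h1 h4 h5
    rw [z13, z16] at h1
    simp at h1
    have hg0 : g 0 = 0 := h1.resolve_right e14
    rw [hg0, z46] at h4
    simp at h4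
    have hg1 : g 1 = 0 := h4.resolve_right e43
    rw [hg0, hg1] at h5
    simp at h5
    have hg2 : g 2 = 0 := h5.resolve_right e56
    intro i
    fin_cases i
    · exact hg0
    · exact hg1
    · exact hg2
  have hspan : Submodule.span ℂ (Set.range u) ≤ LinearMap.range M.mulVecLin :=
    Submodule.span_le.mpr (Set.range_subset_iff.mpr hmem)
  have h3 : Module.finrank ℂ (Submodule.span ℂ (Set.range u)) = 3 := by
    rw [finrank_span_eq_card hli]; simp
  calc 3 = Module.finrank ℂ (Submodule.span ℂ (Set.range u)) := h3.symm
    _ ≤ Module.finrank ℂ (LinearMap.range M.mulVecLin) := Submodule.finrank_mono hspan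
    _ = M.rank := rfl

/-- msr(G1231) = 3. -/
theorem msr_G1231 :
    (∃ M : Matrix (Fin 7) (Fin 7) ℂ, M.PosSemidef ∧ HasGraphG1231 M ∧ M.rank = 3) ∧
    (∀ M : Matrix (Fin 7) (Fin 7) ℂ, M.PosSemidef → HasGraphG1231 M → 3 ≤ M.rank) := by
  constructor
  · refine ⟨MmatG1231, Matrix.posSemidef_conjTranspose_mul_self AmatG1231, MmatG1231_graph, ?_⟩
    have hle : MmatG1231.rank ≤ 3 := by
      rw [MmatG1231, Matrix.rank_conjTranspose_mul_self]
      simpa using AmatG1231.rank_le_card_height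
    exact le_antisymm hle (msr_G1231_lower MmatG1231 MmatG1231_graph)
  · exact fun M _ hG => msr_G1231_lower M hG
end

section
/- Let G be the simple graph on vertex set {1,...,7} with edge set E = {{1,2},{1,3},{1,4},{1,5},{1,6},{2,4},{2,5},{2,7},{3,4},{3,6},{3,7},{4,5},{4,6},{5,7},{6,7}} (the graph G1211 of the atlas). Then msr(G) = 2; that is, there exists a 7×7 Hermitian positive semidefinite complex matrix with graph G of rank 2, and every 7×7 Hermitian positive semidefinite complex matrix with graph G has rank at least 2. -/
open Matrix ComplexOrder

/-- The edge set of the graph G1211 on vertices 1,...,7. -/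
def edgesG1211 : Set (Sym2 ℕ) :=
  {s(1, 2), s(1, 3), s(1, 4), s(1, 5), s(1, 6), s(2, 4), s(2, 5), s(2, 7), s(3, 4), s(3, 6), s(3, 7), s(4, 5), s(4, 6), s(5, 7), s(6, 7)}

/-- `M` has graph G1211: for `i ≠ j`, `M i j ≠ 0` iff `{i+1, j+1}` is an edge of G1211. -/
def HasGraphG1211 (M : Matrix (Fin 7) (Fin 7) ℂ) : Prop :=
  ∀ i j : Fin 7, i ≠ j → (M i j ≠ 0 ↔ s((i : ℕ) + 1, (j : ℕ) + 1) ∈ edgesG1211)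

/-- The Gram vectors witnessing msr ≤ 2. -/
def AmatG1211 : Matrix (Fin 7) (Fin 2) ℂ :=
  Matrix.of fun i k =>
    if k = 0 then (if i = 2 ∨ i = 5 then 0 else 1)
    else if i = 1 ∨ i = 4 then 0 else if i = 6 then -1 else 1

open scoped MatrixOrder in
lemma psd_offdiag_zero {n : Type*} [Fintype n] [DecidableEq n] {M : Matrix n n ℂ}
    (hM : M.PosSemidef) {i : n} (h : M i i = 0) (j : n) : M i j = 0 := by
  obtain ⟨B, rfl⟩ := CStarAlgebra.nonneg_iff_eq_star_mul_self.mp hM.nonneg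
  simp only [Matrix.star_eq_conjTranspose] at h ⊢
  have h0 : ∀ k, B k i = 0 := by
    have hd : (fun k => star (B k i)) ⬝ᵥ (fun k => B k i) = 0 := by
      simpa [Matrix.mul_apply, dotProduct] using h
    intro k
    have := (dotProduct_star_self_eq_zero (v := fun k => B k i)).mp
      (by simpa [dotProduct] using hd)
    exact congrFun this k
  simp [Matrix.mul_apply, h0]

lemma rank_AmatG1211 : AmatG1211.rank = 2 := by
  have hinj : Function.Injective AmatG1211.mulVecLin := by
    intro x y hxy
    have h1 := congrFun hxy 1
    have h2 := congrFun hxy 2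
    simp only [mulVecLin_apply, mulVec, dotProduct, Fin.sum_univ_two, AmatG1211,
      Matrix.of_apply] at h1 h2
    norm_num at h1 h2
    funext k
    fin_cases k
    · exact h1
    · exact h2
  rw [Matrix.rank, LinearMap.finrank_range_of_inj hinj]
  simp

set_option maxHeartbeats 1000000 in
lemma hasGraph_AmatG1211 : HasGraphG1211 (AmatG1211 * AmatG1211ᴴ) := by
  intro i j hij
  fin_cases i <;> fin_cases j <;>
    first
    | exact absurd rfl hij
    | exact iff_of_true
        (by norm_num (config := { decide := true }) [AmatG1211, Matrix.mul_apply,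
          Fin.sum_univ_two, Matrix.conjTranspose_apply])
        (by simp only [edgesG1211, Set.mem_insert_iff, Set.mem_singleton_iff]; decide)
    | exact iff_of_false
        (not_not_intro (by norm_num (config := { decide := true }) [AmatG1211, Matrix.mul_apply,
          Fin.sum_univ_two, Matrix.conjTranspose_apply]))
        (by simp only [edgesG1211, Set.mem_insert_iff, Set.mem_singleton_iff]; decide)

/-- msr(G1211) = 2. -/
theorem msr_G1211 :
    (∃ M : Matrix (Fin 7) (Fin 7) ℂ, M.PosSemidef ∧ HasGraphG1211 M ∧ M.rank = 2) ∧
    (∀ M : Matrix (Fin 7) (Fin 7) ℂ, M.PosSemidef → HasGraphG1211 M → 2 ≤ M.rank) := by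
  constructor
  · exact ⟨AmatG1211 * AmatG1211ᴴ, Matrix.posSemidef_self_mul_conjTranspose _,
      hasGraph_AmatG1211, by rw [Matrix.rank_self_mul_conjTranspose, rank_AmatG1211]⟩
  · intro M hM hG
    have h61 : M 6 1 ≠ 0 := (hG 6 1 (by decide)).mpr
      (by simp only [edgesG1211, Set.mem_insert_iff, Set.mem_singleton_iff]; decide)
    have h60 : M 6 0 = 0 := by
      by_contra h
      have hmem := (hG 6 0 (by decide)).mp h
      simp only [edgesG1211, Set.mem_insert_iff, Set.mem_singleton_iff] at hmem
      revert hmem; decide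
    have h01 : M 0 1 ≠ 0 := (hG 0 1 (by decide)).mpr
      (by simp only [edgesG1211, Set.mem_insert_iff, Set.mem_singleton_iff]; decide)
    have h00 : M 0 0 ≠ 0 := fun h => h01 (psd_offdiag_zero hM h 1)
    set c0 : Fin 7 → ℂ := fun i => M i 0 with hc0
    set c1 : Fin 7 → ℂ := fun i => M i 1 with hc1
    have hli : LinearIndependent ℂ ![c0, c1] := by
      rw [LinearIndependent.pair_iff]
      intro s t hst
      have h6 := congrFun hst 6
      have h0 := congrFun hst 0
      simp only [hc0, hc1, Pi.add_apply, Pi.smul_apply, smul_eq_mul, Pi.zero_apply, h60,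
        mul_zero, zero_add] at h6 h0
      have ht : t = 0 := by
        rcases mul_eq_zero.mp h6 with h | h
        · exact h
        · exact absurd h h61
      subst ht
      refine ⟨?_, rfl⟩
      rw [zero_mul, add_zero] at h0
      rcases mul_eq_zero.mp h0 with h | h
      · exact h
      · exact absurd h h00
    have hspan : Submodule.span ℂ (Set.range ![c0, c1]) ≤ LinearMap.range M.mulVecLin := by
      rw [Submodule.span_le]
      rintro x ⟨k, rfl⟩
      fin_cases k
      · exact ⟨Pi.single 0 1, by simp [mulVecLin_apply, hc0]; rfl⟩
      · exact ⟨Pi.single 1 1, by simp [mulVecLin_apply, hc1]; rfl⟩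
    have hfr : Module.finrank ℂ (Submodule.span ℂ (Set.range ![c0, c1])) = 2 := by
      rw [finrank_span_eq_card hli]
      simp
    calc 2 = Module.finrank ℂ (Submodule.span ℂ (Set.range ![c0, c1])) := hfr.symm
      _ ≤ Module.finrank ℂ (LinearMap.range M.mulVecLin) := Submodule.finrank_mono hspan
      _ = M.rank := rfl
end

section
/- Let G be the simple graph on vertex set {1,...,7} with edge set E = {{1,2},{1,4},{1,5},{1,7},{2,3},{2,4},{2,5},{2,6},{3,4},{3,5},{3,6},{3,7},{4,5},{4,6},{5,6},{5,7},{6,7}} (the graph G1242 of the atlas). Then msr(G) = 2; that is, there exists a 7×7 Hermitian positive semidefinite complex matrix with graph G of rank 2, and every 7×7 Hermitian positive semidefinite complex matrix with graph G has rank at least 2. -/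
open Matrix ComplexOrder

/-- The edge set of the graph G1242 on vertices 1,...,7. -/
def edgesG1242 : Set (Sym2 ℕ) :=
  {s(1, 2), s(1, 4), s(1, 5), s(1, 7), s(2, 3), s(2, 4), s(2, 5), s(2, 6), s(3, 4), s(3, 5), s(3, 6), s(3, 7), s(4, 5), s(4, 6), s(5, 6), s(5, 7), s(6, 7)}

/-- `M` has graph G1242: for `i ≠ j`, `M i j ≠ 0` iff `{i+1, j+1}` is an edge of G1242. -/
def HasGraphG1242 (M : Matrix (Fin 7) (Fin 7) ℂ) : Prop :=
  ∀ i j : Fin 7, i ≠ j → (M i j ≠ 0 ↔ s((i : ℕ) + 1, (j : ℕ) + 1) ∈ edgesG1242)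

/-- For a positive semidefinite matrix, a nonzero off-diagonal entry forces the
corresponding diagonal entry to be nonzero. -/
lemma diag_ne_zero' {M : Matrix (Fin 7) (Fin 7) ℂ} (hM : M.PosSemidef) {i j : Fin 7}
    (h : M i j ≠ 0) : M i i ≠ 0 := by
  obtain ⟨B, rfl⟩ : ∃ B : Matrix (Fin 7) (Fin 7) ℂ, M = Bᴴ * B := by
    open scoped MatrixOrder in
    exact CStarAlgebra.nonneg_iff_eq_star_mul_self.mp hM.nonneg
  intro h0
  apply h
  have hz : ∀ k, B k i = 0 := by
    have h1 : ∑ k, (Complex.normSq (B k i) : ℂ) = 0 := by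
      rw [← h0]
      simp [mul_apply, conjTranspose_apply, Complex.normSq_eq_conj_mul_self]
    have h2 : ∑ k, Complex.normSq (B k i) = 0 := by exact_mod_cast h1
    intro k
    have := (Finset.sum_eq_zero_iff_of_nonneg (fun k _ => Complex.normSq_nonneg (B k i))).mp
      h2 k (Finset.mem_univ k)
    exact Complex.normSq_eq_zero.mp this
  simp [mul_apply, conjTranspose_apply, hz]

/-- Every PSD matrix with graph G1242 has rank at least 2. -/
lemma lowerG1242 : ∀ M : Matrix (Fin 7) (Fin 7) ℂ, M.PosSemidef → HasGraphG1242 M →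
    2 ≤ M.rank := by
  intro M hM hG
  have h01 : M 0 1 ≠ 0 := (hG 0 1 (by decide)).mpr (by
    simp only [edgesG1242, Set.mem_insert_iff, Set.mem_singleton_iff]; decide)
  have h23 : M 2 3 ≠ 0 := (hG 2 3 (by decide)).mpr (by
    simp only [edgesG1242, Set.mem_insert_iff, Set.mem_singleton_iff]; decide)
  have h02 : M 0 2 = 0 := by
    by_contra h
    have := (hG 0 2 (by decide)).mp h
    simp only [edgesG1242, Set.mem_insert_iff, Set.mem_singleton_iff] at this
    revert this; decide
  have h20 : M 2 0 = 0 := by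
    by_contra h
    have := (hG 2 0 (by decide)).mp h
    simp only [edgesG1242, Set.mem_insert_iff, Set.mem_singleton_iff] at this
    revert this; decide
  have h00 : M 0 0 ≠ 0 := diag_ne_zero' hM h01
  have h22 : M 2 2 ≠ 0 := diag_ne_zero' hM h23
  set v0 : Fin 7 → ℂ := M.mulVec (Pi.single 0 1) with hv0
  set v2 : Fin 7 → ℂ := M.mulVec (Pi.single 2 1) with hv2
  have ev0 : ∀ k, v0 k = M k 0 := by intro k; simp [hv0, mulVec_single]
  have ev2 : ∀ k, v2 k = M k 2 := by intro k; simp [hv2, mulVec_single]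
  have hli : LinearIndependent ℂ ![v0, v2] := by
    rw [LinearIndependent.pair_iff]
    intro s t hst
    have e0 := congrFun hst 0
    have e2 := congrFun hst 2
    simp [ev0, ev2, h02, h20] at e0 e2
    constructor
    · rcases e0 with e0 | e0
      · exact e0
      · exact absurd e0 h00
    · rcases e2 with e2 | e2
      · exact e2
      · exact absurd e2 h22
  have hspan : Submodule.span ℂ (Set.range ![v0, v2]) ≤ LinearMap.range M.mulVecLin := by
    rw [Submodule.span_le]
    rintro x ⟨i, rfl⟩
    fin_cases i
    · exact ⟨Pi.single 0 1, rfl⟩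
    · exact ⟨Pi.single 2 1, rfl⟩
  have : 2 ≤ Module.finrank ℂ (LinearMap.range M.mulVecLin) := by
    have hcard := finrank_span_eq_card hli
    simp only [Fintype.card_fin] at hcard
    calc 2 = Module.finrank ℂ (Submodule.span ℂ (Set.range ![v0, v2])) := hcard.symm
      _ ≤ _ := Submodule.finrank_mono hspan
  exact this

def r0G1242 : ℕ → ℂ
  | 0 => 1 | 1 => 1 | 2 => 0 | 3 => 2 | 4 => 2 | 5 => 0 | 6 => 1 | _ => 0

def r1G1242 : ℕ → ℂ
  | 0 => 0 | 1 => 1 | 2 => 1 | 3 => 2 | 4 => 1 | 5 => 2 | 6 => -1 | _ => 0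

/-- A 2×7 matrix whose Gram matrix realizes the graph G1242. -/
def BmatG1242 : Matrix (Fin 2) (Fin 7) ℂ := of ![fun j => r0G1242 j, fun j => r1G1242 j]

set_option maxHeartbeats 2000000 in
lemma hasGraph_BmatG1242 : HasGraphG1242 (BmatG1242ᴴ * BmatG1242) := by
  intro i j hij
  fin_cases i <;> fin_cases j <;>
    first
    | exact absurd rfl hij
    | exact iff_of_true
        (by norm_num [BmatG1242, mul_apply, conjTranspose_apply, Fin.sum_univ_two,
          r0G1242, r1G1242, map_ofNat])
        (by simp only [edgesG1242, Set.mem_insert_iff, Set.mem_singleton_iff]; decide)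
    | exact iff_of_false
        (by norm_num [BmatG1242, mul_apply, conjTranspose_apply, Fin.sum_univ_two,
          r0G1242, r1G1242, map_ofNat])
        (by simp only [edgesG1242, Set.mem_insert_iff, Set.mem_singleton_iff]; decide)

/-- msr(G1242) = 2. -/
theorem msr_G1242 :
    (∃ M : Matrix (Fin 7) (Fin 7) ℂ, M.PosSemidef ∧ HasGraphG1242 M ∧ M.rank = 2) ∧
    (∀ M : Matrix (Fin 7) (Fin 7) ℂ, M.PosSemidef → HasGraphG1242 M → 2 ≤ M.rank) := by
  refine ⟨⟨BmatG1242ᴴ * BmatG1242, posSemidef_conjTranspose_mul_self _, hasGraph_BmatG1242, ?_⟩,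
    lowerG1242⟩
  refine le_antisymm ?_ (lowerG1242 _ (posSemidef_conjTranspose_mul_self _) hasGraph_BmatG1242)
  calc (BmatG1242ᴴ * BmatG1242).rank = BmatG1242.rank := rank_conjTranspose_mul_self _
    _ ≤ Fintype.card (Fin 2) := rank_le_card_height _
    _ = 2 := Fintype.card_fin 2
end
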